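/- arXiv:1309.2145 — 8 statements merged into one kernel-verified Lean document; each statement's English description precedes it below -/
import Mathlib

section
/- There exists a family (E_i)_{i<ω₁} of infinite subsets of ℕ, indexed by the first uncountable ordinal, such that (1) E_i ∩ E_j is finite whenever i ≠ j, and (2) for every i < ω₁ and every m ∈ ℕ, the set {j < i : E_j ∩ E_i ⊆ {0,1,...,m-1}} is finite. -/
open Cardinal Ordinal

/-- Step lemma: given a countable family of infinite, pairwise almost disjoint sets,
there is an infinite set `E` almost disjoint from all of them that meets each `A n`
at a point `≥ n`. -/
lemma luzin_step (A : ℕ → Set ℕ) (hA : ∀ n, (A n).Infinite)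
    (hAD : ∀ m n, m ≠ n → (A m ∩ A n).Finite) :
    ∃ E : Set ℕ, E.Infinite ∧ (∀ n, (E ∩ A n).Finite) ∧
      (∀ n, ∃ k, k ∈ E ∩ A n ∧ n ≤ k) := by
  have hS : ∀ n, (A n \ ⋃ j ∈ Finset.range n, A j).Infinite := by
    intro n
    have : (A n ∩ ⋃ j ∈ Finset.range n, A j).Finite := by
      rw [Set.inter_iUnion₂]
      apply Set.Finite.biUnion (Finset.range n).finite_toSet
      intro j hj
      exact hAD n j (by simp at hj; omega)
    have := (hA n).diff this
    refine this.mono ?_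
    intro x hx
    simp only [Set.mem_diff, Set.mem_inter_iff, not_and] at *
    exact ⟨hx.1, fun h => hx.2 hx.1 h⟩
  have hgt : ∀ n b, ∃ c, c ∈ (A n \ ⋃ j ∈ Finset.range n, A j) ∧ b < c := by
    intro n b
    obtain ⟨c, hc, hbc⟩ := (hS n).exists_gt b
    exact ⟨c, hc, hbc⟩
  choose g hg1 hg2 using hgt
  set k : ℕ → ℕ := fun n => Nat.rec (g 0 0) (fun n kn => g (n+1) kn) n with hk
  have hkmem : ∀ n, k n ∈ A n \ ⋃ j ∈ Finset.range n, A j := by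
    intro n; cases n with
    | zero => exact hg1 0 0
    | succ n => exact hg1 (n+1) (k n)
  have hmono : StrictMono k := by
    apply strictMono_nat_of_lt_succ
    intro n
    exact hg2 (n+1) (k n)
  refine ⟨Set.range k, Set.infinite_range_of_injective hmono.injective, ?_, ?_⟩
  · intro n
    have hsub : Set.range k ∩ A n ⊆ k '' Set.Iic n := by
      rintro x ⟨⟨m, rfl⟩, hxA⟩
      refine ⟨m, ?_, rfl⟩
      by_contra h
      simp only [Set.mem_Iic, not_le] at h
      have := hkmem m
      rw [Set.mem_diff] at this
      exact this.2 (Set.mem_biUnion (Finset.mem_range.2 h) hxA)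
    exact ((Set.finite_Iic n).image k).subset hsub
  · intro n
    exact ⟨k n, ⟨Set.mem_range_self n, (hkmem n).1⟩, hmono.le_apply⟩

abbrev I1 := {i : Ordinal // i < (Cardinal.aleph 1).ord}

lemma wfI : WellFounded ((· < ·) : I1 → I1 → Prop) :=
  InvImage.wf (fun i : I1 => i.1) Ordinal.lt_wf

lemma countable_Iio_I1 (i : I1) : Countable ↥(Set.Iio i) := by
  have h1 : #(Set.Iio i.1) ≤ ℵ₀ := by
    rw [Ordinal.mk_Iio_ordinal, Cardinal.lift_le_aleph0]
    have h2 : i.1.card < Cardinal.aleph 1 := Cardinal.lt_ord.1 i.2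
    have h3 : Cardinal.aleph 1 = Order.succ (Cardinal.aleph 0) := by
      rw [← Cardinal.aleph_succ]; norm_num
    have h4 : i.1.card < Order.succ (Cardinal.aleph 0) := h3 ▸ h2
    simpa [Cardinal.aleph_zero] using Order.lt_succ_iff.1 h4
  have hc : Countable ↥(Set.Iio i.1) := Cardinal.mk_le_aleph0_iff.1 h1
  exact Function.Injective.countable
    (f := fun j : ↥(Set.Iio i) => (⟨j.1.1, j.2⟩ : ↥(Set.Iio i.1)))
    (by intro a b hab
        have hab := congrArg Subtype.val hab
        exact Subtype.ext (Subtype.ext hab))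

/-- A partition of `ℕ` into infinitely many infinite pieces. -/
def Pn (n : ℕ) : Set ℕ := Set.range (Nat.pair n)

lemma Pn_infinite (n : ℕ) : (Pn n).Infinite :=
  Set.infinite_range_of_injective (fun _ _ h => (Nat.pair_eq_pair.1 h).2)

lemma Pn_disjoint {m n : ℕ} (h : m ≠ n) : Pn m ∩ Pn n = ∅ := by
  ext x
  simp only [Pn, Set.mem_inter_iff, Set.mem_range, Set.mem_empty_iff_false, iff_false, not_and]
  rintro ⟨a, rfl⟩ ⟨b, hb⟩
  exact h ((Nat.pair_eq_pair.1 hb).1.symm)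

/-- The desired properties of the set chosen at one stage relative to the enumerated
family of previous sets. -/
def LGood (A : ℕ → Set ℕ) (E : Set ℕ) : Prop :=
  E.Infinite ∧ (∀ n, (E ∩ A n).Finite) ∧ (∀ n, ∃ k, k ∈ E ∩ A n ∧ n ≤ k)

/-- A fixed enumeration of the predecessors of `i`, when there are infinitely many. -/
noncomputable def lenum (i : I1) (h : ¬ (Set.Iio i).Finite) : ℕ ≃ ↥(Set.Iio i) :=
  haveI : Infinite ↥(Set.Iio i) := Set.infinite_coe_iff.2 h
  haveI : Countable ↥(Set.Iio i) := countable_Iio_I1 i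
  haveI : Denumerable ↥(Set.Iio i) :=
    (nonempty_denumerable_iff.2 ⟨inferInstance, inferInstance⟩).some
  (Denumerable.eqv _).symm

open Classical in
/-- One step of the recursion. -/
noncomputable def lstep (i : I1) (F : ∀ j : I1, j < i → Set ℕ) : Set ℕ :=
  if hfin : (Set.Iio i).Finite then Pn (Set.Iio i).ncard
  else if h : ∃ E, LGood (fun n => F ((lenum i hfin) n).1 ((lenum i hfin) n).2) E
    then h.choose else ∅

/-- The Luzin family. -/
noncomputable def lfam : I1 → Set ℕ := wfI.fix lstep

lemma lfam_eq (i : I1) : lfam i = lstep i (fun j _ => lfam j) :=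
  wfI.fix_eq lstep i

lemma lstep_finite (i : I1) (F : ∀ j : I1, j < i → Set ℕ) (h : (Set.Iio i).Finite) :
    lstep i F = Pn (Set.Iio i).ncard := by unfold lstep; rw [dif_pos h]

lemma lstep_infinite (i : I1) (F : ∀ j : I1, j < i → Set ℕ) (hfin : ¬ (Set.Iio i).Finite)
    (hinf : ∀ j hj, (F j hj).Infinite)
    (had : ∀ j hj j' hj', j ≠ j' → (F j hj ∩ F j' hj').Finite) :
    LGood (fun n => F ((lenum i hfin) n).1 ((lenum i hfin) n).2) (lstep i F) := by
  have hex : ∃ E, LGood (fun n => F ((lenum i hfin) n).1 ((lenum i hfin) n).2) E := by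
    apply luzin_step
    · intro n; exact hinf _ _
    · intro m n hmn
      apply had
      intro hval
      exact hmn ((lenum i hfin).injective (Subtype.ext hval))
  have hl : lstep i F = hex.choose := by
    unfold lstep
    rw [dif_neg hfin, dif_pos hex]
  rw [hl]
  exact hex.choose_spec

lemma lfam_spec : ∀ i : I1, (lfam i).Infinite ∧ ∀ j : I1, j < i → (lfam i ∩ lfam j).Finite := by
  refine fun i => wfI.induction
    (C := fun i => (lfam i).Infinite ∧ ∀ j : I1, j < i → (lfam i ∩ lfam j).Finite) i ?_
  intro i IH
  by_cases hfin : (Set.Iio i).Finite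
  · constructor
    · rw [lfam_eq, lstep_finite _ _ hfin]; exact Pn_infinite _
    · intro j hj
      have hjfin : (Set.Iio j).Finite := hfin.subset (fun x hx => lt_trans hx hj)
      rw [lfam_eq i, lstep_finite _ _ hfin, lfam_eq j, lstep_finite _ _ hjfin]
      have hss : Set.Iio j ⊂ Set.Iio i := by
        constructor
        · exact fun x hx => lt_trans hx hj
        · intro hsub
          exact absurd (hsub hj) (lt_irrefl j)
      have : (Set.Iio j).ncard < (Set.Iio i).ncard := Set.ncard_lt_ncard hss hfin
      rw [Pn_disjoint (Nat.ne_of_gt this)]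
      exact Set.finite_empty
  · have hG := lstep_infinite i (fun j _ => lfam j) hfin
      (fun j hj => (IH j hj).1)
      (fun j hj j' hj' hne => by
        rcases lt_trichotomy j j' with h | h | h
        · rw [Set.inter_comm]; exact (IH j' hj').2 j h
        · exact absurd h hne
        · exact (IH j hj).2 j' h)
    rw [lfam_eq i]
    refine ⟨hG.1, ?_⟩
    intro j hj
    set e := lenum i hfin with he
    set n := e.symm ⟨j, hj⟩ with hn
    have hen : e n = ⟨j, hj⟩ := e.apply_symm_apply _
    have := hG.2.1 n
    simp only [hen] at this
    exact this

/-- Luzin's construction: a family `(E i)` of infinite subsets of `ℕ` indexed by the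
ordinals below `ω₁` which is almost disjoint and such that for every `i` and `m`,
only finitely many `j < i` satisfy `E j ∩ E i ⊆ {0, …, m-1}`. -/
theorem luzin_family_exists :
    ∃ E : {i : Ordinal // i < (Cardinal.aleph 1).ord} → Set ℕ,
      (∀ i, (E i).Infinite) ∧
      (∀ i j, i ≠ j → (E i ∩ E j).Finite) ∧
      (∀ i : {i : Ordinal // i < (Cardinal.aleph 1).ord}, ∀ m : ℕ,
        {j | j < i ∧ E j ∩ E i ⊆ Set.Iio m}.Finite) := by
  refine ⟨lfam, fun i => (lfam_spec i).1, ?_, ?_⟩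
  · intro i j hij
    rcases lt_trichotomy i j with h | h | h
    · rw [Set.inter_comm]; exact (lfam_spec j).2 i h
    · exact absurd h hij
    · exact (lfam_spec i).2 j h
  · intro i m
    by_cases hfin : (Set.Iio i).Finite
    · exact hfin.subset (fun j hj => hj.1)
    · have hG := lstep_infinite i (fun j _ => lfam j) hfin
        (fun j hj => (lfam_spec j).1)
        (fun j hj j' hj' hne => by
          rcases lt_trichotomy j j' with h | h | h
          · rw [Set.inter_comm]; exact (lfam_spec j').2 j h
          · exact absurd h hne
          · exact (lfam_spec j).2 j' h)
      set e := lenum i hfin with he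
      have hsub : {j : I1 | j < i ∧ lfam j ∩ lfam i ⊆ Set.Iio m} ⊆
          (fun n : ℕ => ((e n : ↥(Set.Iio i)) : I1)) '' Set.Iio m := by
        rintro j ⟨hj, hsubm⟩
        set n := e.symm ⟨j, hj⟩ with hn
        have hen : e n = ⟨j, hj⟩ := e.apply_symm_apply _
        obtain ⟨k, hk, hnk⟩ := hG.2.2 n
        simp only at hk
        rw [hen] at hk
        have hk2 : k ∈ lfam j ∩ lfam i := by
          rw [← lfam_eq i] at hk
          exact ⟨hk.2, hk.1⟩
        have hkm : k < m := hsubm hk2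
        exact ⟨n, lt_of_le_of_lt hnk hkm, by
          show ((e n : ↥(Set.Iio i)) : I1) = j
          rw [hen]⟩
      exact ((Set.finite_Iio m).image _).subset hsub
end

section
/- Let (E_i)_{i<ω₁} be a family of infinite subsets of ℕ such that E_i ∩ E_j is finite for i ≠ j and such that for every i and every m, the set {j < i : E_j ∩ E_i ⊆ {0,...,m-1}} is finite (a Luzin family). Then for every X ⊆ ω₁ with both X and ω₁ \ X uncountable, there is no F ⊆ ℕ such that E_i \ F is finite for all i ∈ X and E_i ∩ F is finite for all i ∈ ω₁ \ X. -/
open Cardinal Ordinal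

/-- A bounded subset of `ω₁` is countable. -/
lemma luzin_aux_bdd_countable {β : Ordinal} (hβ : β < (Cardinal.aleph 1).ord)
    (s : Set {i : Ordinal // i < (Cardinal.aleph 1).ord}) (hs : ∀ i ∈ s, i.1 ≤ β) :
    s.Countable := by
  have hβ1 : β + 1 < (Cardinal.aleph 1).ord := by
    rw [Ordinal.add_one_eq_succ]
    exact (Cardinal.isSuccLimit_ord (Cardinal.aleph0_le_aleph 1)).succ_lt hβ
  have hcard : (β + 1).card ≤ ℵ₀ := by
    have h1 := Cardinal.lt_ord.mp hβ1
    rwa [← Cardinal.succ_aleph0, Order.lt_succ_iff] at h1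
  have hcnt : Countable (Set.Iio (β + 1) : Set Ordinal) := by
    rw [← Cardinal.mk_le_aleph0_iff, Ordinal.mk_Iio_ordinal, Cardinal.lift_le_aleph0]
    exact hcard
  rw [← Set.countable_coe_iff]
  have hinj : Function.Injective
      (fun x : s => (⟨x.1.1, lt_of_le_of_lt (hs x.1 x.2) (lt_add_one β)⟩ :
        (Set.Iio (β + 1) : Set Ordinal))) := by
    intro a b hab
    simp only [Subtype.mk.injEq] at hab
    have hab' : a.1.1 = b.1.1 := Subtype.mk.inj hab
    exact Subtype.ext (Subtype.ext hab')
  exact Function.Injective.countable hinj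

/-- Pigeonhole: an uncountable set has an uncountable fiber under a map to `ℕ`. -/
lemma luzin_aux_pigeonhole {α : Type*} (s : Set α) (hs : ¬ s.Countable) (f : α → ℕ) :
    ∃ n, ¬ (s ∩ f ⁻¹' {n}).Countable := by
  by_contra h
  push_neg at h
  apply hs
  have : s ⊆ ⋃ n, s ∩ f ⁻¹' {n} := fun i hi => Set.mem_iUnion.mpr ⟨f i, hi, rfl⟩
  exact (Set.countable_iUnion h).mono this

/-- A Luzin family cannot be separated along any uncountable partition: if `X` and its
complement are both uncountable, there is no `F ⊆ ℕ` with `E i \ F` finite for `i ∈ X`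
and `E i ∩ F` finite for `i ∉ X`. -/
theorem luzin_family_not_separated
    (E : {i : Ordinal // i < (Cardinal.aleph 1).ord} → Set ℕ)
    (hinf : ∀ i, (E i).Infinite)
    (had : ∀ i j, i ≠ j → (E i ∩ E j).Finite)
    (hluzin : ∀ i : {i : Ordinal // i < (Cardinal.aleph 1).ord}, ∀ m : ℕ,
      {j | j < i ∧ E j ∩ E i ⊆ Set.Iio m}.Finite)
    (X : Set {i : Ordinal // i < (Cardinal.aleph 1).ord})
    (hX : ¬ X.Countable) (hXc : ¬ (Xᶜ).Countable) :
    ¬ ∃ F : Set ℕ,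
        (∀ i ∈ X, (E i \ F).Finite) ∧ (∀ i ∈ Xᶜ, (E i ∩ F).Finite) := by
  rintro ⟨F, h1, h2⟩
  classical
  -- For each i, pick a bound for the relevant finite set.
  have hfin : ∀ i, (if i ∈ X then E i \ F else E i ∩ F).Finite := by
    intro i
    by_cases hi : i ∈ X
    · simpa [hi] using h1 i hi
    · simpa [hi] using h2 i hi
  choose f hf using fun i => (hfin i).bddAbove
  -- hf : f i ∈ upperBounds ...
  obtain ⟨m, hm⟩ := luzin_aux_pigeonhole X hX f
  obtain ⟨n, hn⟩ := luzin_aux_pigeonhole Xᶜ hXc f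
  set M := max m n with hM
  -- key: for i in the X-fiber and j in the Xᶜ-fiber, E i ∩ E j ⊆ Iio (M+1)
  have key : ∀ i ∈ X ∩ f ⁻¹' {m}, ∀ j ∈ Xᶜ ∩ f ⁻¹' {n}, E j ∩ E i ⊆ Set.Iio (M + 1) := by
    rintro i ⟨hiX, hif⟩ j ⟨hjX, hjf⟩ x ⟨hxj, hxi⟩
    simp only [Set.mem_preimage, Set.mem_singleton_iff] at hif hjf
    by_cases hxF : x ∈ F
    · have : x ∈ E j ∩ F := ⟨hxj, hxF⟩
      have hub := hf j
      rw [if_neg hjX] at hub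
      have : x ≤ f j := hub this
      simp only [Set.mem_Iio]
      omega
    · have : x ∈ E i \ F := ⟨hxi, hxF⟩
      have hub := hf i
      rw [if_pos hiX] at hub
      have : x ≤ f i := hub this
      simp only [Set.mem_Iio]
      omega
  -- Take countably many j's in the Xᶜ-fiber.
  have hninf : (Xᶜ ∩ f ⁻¹' {n}).Infinite := by
    intro hfin'
    exact hn hfin'.countable
  let g := hninf.natEmbedding
  -- Their sup is below ω₁.
  have hsup : (⨆ k, ((g k : {i : Ordinal // i < (Cardinal.aleph 1).ord}) : Ordinal))
      < (Cardinal.aleph 1).ord :=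
    by
      have h := fun k => (g k).1.2
      simp only [Cardinal.ord_aleph] at h ⊢
      exact Ordinal.iSup_lt_omega_one h
  -- Find i in the X-fiber above the sup.
  have : ¬ ∀ i ∈ X ∩ f ⁻¹' {m},
      (i : {i : Ordinal // i < (Cardinal.aleph 1).ord}).1 ≤ ⨆ k, ((g k).1 : Ordinal) := by
    intro h
    exact hm (luzin_aux_bdd_countable hsup _ h)
  push_neg at this
  obtain ⟨i, hiX, hi⟩ := this
  -- All g k are below i and have small intersection with E i: contradicts Luzin property.
  have hsub : (Set.range fun k => ((g k).1 : {i : Ordinal // i < (Cardinal.aleph 1).ord}))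
      ⊆ {j | j < i ∧ E j ∩ E i ⊆ Set.Iio (M + 1)} := by
    rintro _ ⟨k, rfl⟩
    refine ⟨?_, key i hiX _ (g k).2⟩
    have hle : ((g k).1 : Ordinal) ≤ ⨆ k, ((g k).1 : Ordinal) :=
      le_ciSup (Ordinal.bddAbove_range _) k
    exact Subtype.mk_lt_mk.mpr (lt_of_le_of_lt hle hi)
  have hrinf : (Set.range fun k => ((g k).1 :
      {i : Ordinal // i < (Cardinal.aleph 1).ord})).Infinite := by
    apply Set.infinite_range_of_injective
    intro a b hab
    exact g.injective (Subtype.ext hab)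
  exact (hrinf.mono hsub) (hluzin i (M + 1))
end

section
/- Let s⁰ = [[1,0],[0,-1]] and s¹ = [[1,0],[1,-1]] in M₂(ℂ). There is no invertible matrix v ∈ M₂(ℂ) such that both v s⁰ v⁻¹ and v s¹ v⁻¹ are unitary. -/
set_option maxHeartbeats 1000000 in
lemma trace_two_unitary_aux {a b c d : ℂ}
    (hrow : Complex.normSq a + Complex.normSq b = 1)
    (hrow' : Complex.normSq c + Complex.normSq d = 1)
    (hcol : Complex.normSq a + Complex.normSq c = 1)
    (htr : a + d = 2) : a = 1 ∧ b = 0 ∧ c = 0 ∧ d = 1 := by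
  have hre : a.re + d.re = 2 := by
    have := congrArg Complex.re htr; simpa using this
  have him : a.im + d.im = 0 := by
    have := congrArg Complex.im htr; simpa using this
  have hna := Complex.normSq_nonneg a
  have hnb := Complex.normSq_nonneg b
  have hnc := Complex.normSq_nonneg c
  have hnd := Complex.normSq_nonneg d
  simp only [Complex.normSq_apply] at hrow hrow' hcol hna hnb hnc hnd
  have h1a : a.re ≤ 1 := by nlinarith [mul_self_nonneg (a.re - 1), mul_self_nonneg a.im]
  have h1d : d.re ≤ 1 := by nlinarith [mul_self_nonneg (d.re - 1), mul_self_nonneg d.im]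
  have hare : a.re = 1 := by linarith
  have hdre : d.re = 1 := by linarith
  rw [hare] at hrow hcol
  norm_num at hrow hcol
  have haim : a.im = 0 := mul_self_eq_zero.mp (by
    linarith [mul_self_nonneg b.re, mul_self_nonneg b.im, mul_self_nonneg a.im])
  have hdim : d.im = 0 := by linarith
  rw [haim] at hrow hcol
  norm_num at hrow hcol
  have hbre : b.re = 0 := mul_self_eq_zero.mp (by linarith [mul_self_nonneg b.re, mul_self_nonneg b.im])
  have hbim : b.im = 0 := mul_self_eq_zero.mp (by linarith [mul_self_nonneg b.re, mul_self_nonneg b.im])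
  have hcre : c.re = 0 := mul_self_eq_zero.mp (by linarith [mul_self_nonneg c.re, mul_self_nonneg c.im])
  have hcim : c.im = 0 := mul_self_eq_zero.mp (by linarith [mul_self_nonneg c.re, mul_self_nonneg c.im])
  refine ⟨Complex.ext ?_ ?_, Complex.ext ?_ ?_, Complex.ext ?_ ?_, Complex.ext ?_ ?_⟩ <;>
    simp [hare, haim, hbre, hbim, hcre, hcim, hdre, hdim]
/-- The involutions `s⁰ = [[1,0],[0,-1]]` and `s¹ = [[1,0],[1,-1]]` in `M₂(ℂ)` are not
simultaneously unitarizable. -/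
theorem not_simultaneously_unitarizable :
    ¬ ∃ v : Matrix (Fin 2) (Fin 2) ℂ, IsUnit v ∧
        v * !![1, 0; 0, -1] * v⁻¹ ∈ Matrix.unitaryGroup (Fin 2) ℂ ∧
        v * !![1, 0; 1, -1] * v⁻¹ ∈ Matrix.unitaryGroup (Fin 2) ℂ := by
  rintro ⟨v, hv, h0, h1⟩
  have hdet : IsUnit v.det := (Matrix.isUnit_iff_isUnit_det v).mp hv
  have hvv : v⁻¹ * v = 1 := Matrix.nonsing_inv_mul v hdet
  set u : Matrix (Fin 2) (Fin 2) ℂ :=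
    (v * !![1, 0; 0, -1] * v⁻¹) * (v * !![1, 0; 1, -1] * v⁻¹) with hu
  have hmem : u ∈ Matrix.unitaryGroup (Fin 2) ℂ := mul_mem h0 h1
  have hprod : !![(1:ℂ), 0; 0, -1] * !![1, 0; 1, -1] = !![1, 0; -1, 1] := by
    norm_num [Matrix.mul_fin_two]
  have huv : u = v * !![(1:ℂ), 0; -1, 1] * v⁻¹ := by
    calc u = v * !![(1:ℂ), 0; 0, -1] * (v⁻¹ * v) * (!![(1:ℂ), 0; 1, -1] * v⁻¹) := by
            rw [hu]; simp only [Matrix.mul_assoc]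
      _ = v * (!![(1:ℂ), 0; 0, -1] * !![(1:ℂ), 0; 1, -1]) * v⁻¹ := by
            rw [hvv, Matrix.mul_one]; simp only [Matrix.mul_assoc]
      _ = v * !![(1:ℂ), 0; -1, 1] * v⁻¹ := by rw [hprod]
  have htr : Matrix.trace u = 2 := by
    rw [huv, Matrix.trace_mul_cycle, hvv, Matrix.one_mul]
    norm_num [Matrix.trace_fin_two_of]
  have hrowone : u * star u = 1 := hmem.2
  have hcolone : star u * u = 1 := hmem.1
  -- entries
  have e00 : u 0 0 * star (u 0 0) + u 0 1 * star (u 0 1) = 1 := by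
    have := congrFun (congrFun hrowone 0) 0
    simpa [Matrix.mul_apply, Fin.sum_univ_two, Matrix.star_apply, Matrix.one_apply] using this
  have e11 : u 1 0 * star (u 1 0) + u 1 1 * star (u 1 1) = 1 := by
    have := congrFun (congrFun hrowone 1) 1
    simpa [Matrix.mul_apply, Fin.sum_univ_two, Matrix.star_apply, Matrix.one_apply] using this
  have ec00 : star (u 0 0) * u 0 0 + star (u 1 0) * u 1 0 = 1 := by
    have := congrFun (congrFun hcolone 0) 0
    simpa [Matrix.mul_apply, Fin.sum_univ_two, Matrix.star_apply, Matrix.one_apply] using this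
  have htr2 : u 0 0 + u 1 1 = 2 := by
    simpa [Matrix.trace_fin_two] using htr
  -- convert to normSq
  have r1 : Complex.normSq (u 0 0) + Complex.normSq (u 0 1) = 1 := by
    have := congrArg Complex.re e00
    simpa [Complex.mul_conj] using this
  have r2 : Complex.normSq (u 1 0) + Complex.normSq (u 1 1) = 1 := by
    have := congrArg Complex.re e11
    simpa [Complex.mul_conj] using this
  have r3 : Complex.normSq (u 0 0) + Complex.normSq (u 1 0) = 1 := by
    have := congrArg Complex.re ec00
    simpa [mul_comm, Complex.mul_conj] using this
  obtain ⟨ha, hb, hc, hd⟩ := trace_two_unitary_aux r1 r2 r3 htr2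
  have huone : u = 1 := by
    ext i j
    fin_cases i <;> fin_cases j <;>
      simp_all [Matrix.one_apply]
  -- deduce s0 * s1 = 1
  have : !![(1:ℂ), 0; -1, 1] = 1 := by
    have h2 : v * !![(1:ℂ), 0; -1, 1] * v⁻¹ = 1 := by rw [← huv, huone]
    calc !![(1:ℂ), 0; -1, 1]
        = v⁻¹ * (v * !![(1:ℂ), 0; -1, 1] * v⁻¹) * v := by
          simp only [← Matrix.mul_assoc]
          rw [hvv, Matrix.one_mul, Matrix.mul_assoc, hvv, Matrix.mul_one]
      _ = 1 := by rw [h2, Matrix.mul_one, hvv]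
  have := congrFun (congrFun this 1) 0
  simp [Matrix.one_apply] at this
end

section
/- Let s⁰ = [[1,0],[0,-1]] and s¹ = [[1,0],[1,-1]] in M₂(ℂ), and let 𝒰 denote the unitary group of M₂(ℂ). For every C > 0, the infimum ε(C) := inf { d(v s⁰ v⁻¹, 𝒰) + d(v s¹ v⁻¹, 𝒰) : v invertible in M₂(ℂ), ‖v‖·‖v⁻¹‖ ≤ C } is strictly positive. -/
open scoped Matrix.Norms.L2Operator
open Matrix

namespace EpsOfCAux

noncomputable section

local notation "M2" => Matrix (Fin 2) (Fin 2) ℂ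

lemma s0_mem : (!![1, 0; 0, -1] : M2) ∈ unitary M2 := by
  rw [Unitary.mem_iff]
  constructor <;>
  · ext i j
    fin_cases i <;> fin_cases j <;>
      simp [Matrix.mul_apply, Fin.sum_univ_two, Matrix.one_apply, Matrix.star_eq_conjTranspose,
        Matrix.conjTranspose_apply]

lemma s0s1 : (!![1, 0; 0, -1] : M2) * !![1, 0; 1, -1] = !![1, 0; -1, 1] := by
  simp [Matrix.mul_fin_two]

lemma Npow (k : ℕ) : (!![1, 0; -1, 1] : M2) ^ k = !![1, 0; -(k : ℂ), 1] := by
  induction k with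
  | zero => simp [Matrix.one_fin_two]
  | succ k ih =>
    rw [pow_succ, ih, Matrix.mul_fin_two]
    push_cast
    ring_nf

lemma norm_N_ge (k : ℕ) : (k : ℝ) ≤ ‖(!![1, 0; -(k : ℂ), 1] : M2)‖ := by
  have h := Matrix.l2_opNorm_mulVec (!![1, 0; -(k : ℂ), 1])
    ((WithLp.equiv 2 (Fin 2 → ℂ)).symm ![1, 0])
  have hx : ‖((WithLp.equiv 2 (Fin 2 → ℂ)).symm ![1, 0] : EuclideanSpace ℂ (Fin 2))‖ = 1 := by
    simp [EuclideanSpace.norm_eq, Fin.sum_univ_two]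
  have hmv : (!![1, 0; -(k : ℂ), 1] : M2) *ᵥ ((WithLp.equiv 2 (Fin 2 → ℂ)).symm ![1, 0])
      = ![1, -(k : ℂ)] := by
    ext i
    fin_cases i <;> simp [Matrix.mulVec, dotProduct, Fin.sum_univ_two]
  rw [hmv, hx, mul_one] at h
  refine le_trans ?_ h
  have hthis : ‖((EuclideanSpace.equiv (Fin 2) ℂ).symm ![1, -(k : ℂ)] : EuclideanSpace ℂ (Fin 2))‖
      = Real.sqrt (1 + (k : ℝ) ^ 2) := by
    simp [EuclideanSpace.norm_eq, Fin.sum_univ_two]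
  rw [hthis]
  calc (k : ℝ) = Real.sqrt ((k : ℝ) ^ 2) := (Real.sqrt_sq (by positivity)).symm
    _ ≤ Real.sqrt (1 + (k : ℝ) ^ 2) := Real.sqrt_le_sqrt (by nlinarith)

end

end EpsOfCAux

open EpsOfCAux in
/-- For every `C > 0`, the infimum `ε(C)` of
`d(v s⁰ v⁻¹, 𝒰) + d(v s¹ v⁻¹, 𝒰)` over invertible `v` with `‖v‖·‖v⁻¹‖ ≤ C` is
strictly positive (equivalently, some `ε > 0` is a lower bound). -/
theorem eps_of_C_pos (C : ℝ) (hC : 0 < C) :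
    ∃ ε > (0 : ℝ), ∀ v : Matrix (Fin 2) (Fin 2) ℂ, IsUnit v → ‖v‖ * ‖v⁻¹‖ ≤ C →
      ε ≤ Metric.infDist (v * !![1, 0; 0, -1] * v⁻¹)
            ((Matrix.unitaryGroup (Fin 2) ℂ : Set (Matrix (Fin 2) (Fin 2) ℂ))) +
          Metric.infDist (v * !![1, 0; 1, -1] * v⁻¹)
            ((Matrix.unitaryGroup (Fin 2) ℂ : Set (Matrix (Fin 2) (Fin 2) ℂ))) := by
  have hC1 : (0 : ℝ) < C + 1 := by linarith
  set n : ℕ := ⌈3 * C⌉₊ + 1 with hn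
  have hnpos : 0 < n := Nat.succ_pos _
  have hnR : (0 : ℝ) < n := by exact_mod_cast hnpos
  have hn3C : 3 * C < n := by
    have h1 : 3 * C ≤ (⌈3 * C⌉₊ : ℝ) := Nat.le_ceil _
    have h2 : ((⌈3 * C⌉₊ : ℕ) : ℝ) < n := by exact_mod_cast Nat.lt_succ_self _
    linarith
  refine ⟨1 / ((C + 1) * n), by positivity, ?_⟩
  intro v hv hCv
  by_contra hlt
  push_neg at hlt
  set ε : ℝ := 1 / ((C + 1) * n) with hε
  have hεpos : 0 < ε := by positivity
  set U : Set (Matrix (Fin 2) (Fin 2) ℂ) :=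
    (Matrix.unitaryGroup (Fin 2) ℂ : Set (Matrix (Fin 2) (Fin 2) ℂ)) with hU
  have hUne : U.Nonempty := ⟨1, one_mem (Matrix.unitaryGroup (Fin 2) ℂ)⟩
  set a : Matrix (Fin 2) (Fin 2) ℂ := v * !![1, 0; 0, -1] * v⁻¹ with ha
  set b : Matrix (Fin 2) (Fin 2) ℂ := v * !![1, 0; 1, -1] * v⁻¹ with hb
  have hda : Metric.infDist a U < ε :=
    lt_of_le_of_lt (le_add_of_nonneg_right Metric.infDist_nonneg) hlt
  have hdb : Metric.infDist b U < ε :=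
    lt_of_le_of_lt (le_add_of_nonneg_left Metric.infDist_nonneg) hlt
  obtain ⟨u, huU, hau⟩ := (Metric.infDist_lt_iff hUne).mp hda
  obtain ⟨w, hwU, hbw⟩ := (Metric.infDist_lt_iff hUne).mp hdb
  rw [dist_eq_norm] at hau hbw
  have hu1 : ‖u‖ = 1 := CStarRing.norm_of_mem_unitary huU
  have hw1 : ‖w‖ = 1 := CStarRing.norm_of_mem_unitary hwU
  have hdet : IsUnit v.det := (Matrix.isUnit_iff_isUnit_det v).mp hv
  have hvv : v * v⁻¹ = 1 := Matrix.mul_nonsing_inv v hdet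
  have hv'v : v⁻¹ * v = 1 := Matrix.nonsing_inv_mul v hdet
  have hs0 : ‖(!![1, 0; 0, -1] : Matrix (Fin 2) (Fin 2) ℂ)‖ = 1 :=
    CStarRing.norm_of_mem_unitary s0_mem
  have ha_le : ‖a‖ ≤ C := by
    calc ‖a‖ ≤ ‖v * !![1, 0; 0, -1]‖ * ‖v⁻¹‖ := norm_mul_le _ _
      _ ≤ ‖v‖ * ‖(!![1, 0; 0, -1] : Matrix (Fin 2) (Fin 2) ℂ)‖ * ‖v⁻¹‖ :=
          mul_le_mul_of_nonneg_right (norm_mul_le _ _) (norm_nonneg _)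
      _ = ‖v‖ * ‖v⁻¹‖ := by rw [hs0, mul_one]
      _ ≤ C := hCv
  have hab : a * b = v * !![1, 0; -1, 1] * v⁻¹ := by
    rw [ha, hb, ← s0s1]
    calc v * !![1, 0; 0, -1] * v⁻¹ * (v * !![1, 0; 1, -1] * v⁻¹)
        = v * !![1, 0; 0, -1] * (v⁻¹ * v) * !![1, 0; 1, -1] * v⁻¹ := by
          simp only [Matrix.mul_assoc]
      _ = v * (!![1, 0; 0, -1] * !![1, 0; 1, -1]) * v⁻¹ := by
          rw [hv'v, Matrix.mul_one]; simp only [Matrix.mul_assoc]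
  have hm : ‖a * b - u * w‖ < 1 / n := by
    have hdecomp : a * b - u * w = a * (b - w) + (a - u) * w := by
      noncomm_ring
    have hmain : ‖a * b - u * w‖ < C * ε + ε := by
      rw [hdecomp]
      calc ‖a * (b - w) + (a - u) * w‖ ≤ ‖a * (b - w)‖ + ‖(a - u) * w‖ := norm_add_le _ _
        _ ≤ ‖a‖ * ‖b - w‖ + ‖a - u‖ * ‖w‖ := add_le_add (norm_mul_le _ _) (norm_mul_le _ _)
        _ ≤ C * ‖b - w‖ + ‖a - u‖ := by
            rw [hw1, mul_one]
            exact add_le_add (mul_le_mul_of_nonneg_right ha_le (norm_nonneg (b - w))) le_rfl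
        _ < C * ε + ε := add_lt_add_of_le_of_lt
            (mul_le_mul_of_nonneg_left hbw.le hC.le) hau
    have hεeq : C * ε + ε = 1 / n := by
      rw [hε]; field_simp
    linarith
  have habnorm : ‖a * b‖ ≤ 1 + 1 / n := by
    have hsplit : a * b = u * w + (a * b - u * w) := by abel
    calc ‖a * b‖ ≤ ‖u * w‖ + ‖a * b - u * w‖ := by
          nth_rewrite 1 [hsplit]; exact norm_add_le _ _
      _ ≤ 1 * 1 + 1 / n := add_le_add
          (le_trans (norm_mul_le _ _) (by rw [hu1, hw1])) hm.le
      _ = 1 + 1 / n := by ring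
  have hpow : ‖(a * b) ^ n‖ ≤ (1 + 1 / (n : ℝ)) ^ n :=
    le_trans (norm_pow_le' _ hnpos) (pow_le_pow_left₀ (norm_nonneg _) habnorm n)
  have hexp : ((1 : ℝ) + 1 / n) ^ n ≤ 3 := by
    have h1 : (1 : ℝ) + 1 / n ≤ Real.exp (1 / n) := by
      have := Real.add_one_le_exp (1 / (n : ℝ)); linarith
    calc ((1 : ℝ) + 1 / n) ^ n ≤ (Real.exp (1 / n)) ^ n :=
          pow_le_pow_left₀ (by positivity) h1 n
      _ = Real.exp ((n : ℝ) * (1 / n)) := by rw [← Real.exp_nat_mul]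
      _ = Real.exp 1 := by rw [mul_one_div, div_self hnR.ne']
      _ ≤ 3 := by have := Real.exp_one_lt_d9; linarith
  have hNpow : (a * b) ^ n = v * !![1, 0; -(n : ℂ), 1] * v⁻¹ := by
    rw [hab, ← Npow n, ← hv.unit_spec, ← Matrix.coe_units_inv]
    exact Units.conj_pow hv.unit _ n
  have hNrec : (!![1, 0; -(n : ℂ), 1] : Matrix (Fin 2) (Fin 2) ℂ) = v⁻¹ * (a * b) ^ n * v := by
    rw [hNpow]
    calc (!![1, 0; -(n : ℂ), 1] : Matrix (Fin 2) (Fin 2) ℂ)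
        = (v⁻¹ * v) * !![1, 0; -(n : ℂ), 1] * (v⁻¹ * v) := by
          rw [hv'v, Matrix.one_mul, Matrix.mul_one]
      _ = v⁻¹ * (v * !![1, 0; -(n : ℂ), 1] * v⁻¹) * v := by
          simp only [Matrix.mul_assoc]
  have hlow : (n : ℝ) ≤ C * ‖(a * b) ^ n‖ := by
    calc (n : ℝ) ≤ ‖(!![1, 0; -(n : ℂ), 1] : Matrix (Fin 2) (Fin 2) ℂ)‖ := norm_N_ge n
      _ = ‖v⁻¹ * (a * b) ^ n * v‖ := by rw [hNrec]
      _ ≤ ‖v⁻¹ * (a * b) ^ n‖ * ‖v‖ := norm_mul_le _ _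
      _ ≤ ‖v⁻¹‖ * ‖(a * b) ^ n‖ * ‖v‖ :=
          mul_le_mul_of_nonneg_right (norm_mul_le _ _) (norm_nonneg _)
      _ = (‖v‖ * ‖v⁻¹‖) * ‖(a * b) ^ n‖ := by ring
      _ ≤ C * ‖(a * b) ^ n‖ :=
          mul_le_mul_of_nonneg_right hCv (norm_nonneg _)
  have hfinal : (n : ℝ) ≤ C * 3 := by
    calc (n : ℝ) ≤ C * ‖(a * b) ^ n‖ := hlow
      _ ≤ C * 3 := mul_le_mul_of_nonneg_left (le_trans hpow hexp) hC.le
  linarith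
end

section
/- Let G be a bounded subgroup of GL(n,ℂ), i.e., sup{‖g‖ : g ∈ G} =: C < ∞. Then there exists an invertible matrix v ∈ GL(n,ℂ) with ‖v‖·‖v⁻¹‖ ≤ C² such that v g v⁻¹ is unitary for every g ∈ G. -/
open scoped Matrix.Norms.L2Operator

section Aux

open scoped ComplexOrder MatrixOrder
open MeasureTheory Matrix Topology

variable {n : ℕ}

private abbrev Mn (n : ℕ) := Matrix (Fin n) (Fin n) ℂ

/-- squared ℓ² norm of a vector -/
private def Nsq (y : Fin n → ℂ) : ℝ := ∑ i, Complex.normSq (y i)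

private lemma Nsq_nonneg (y : Fin n → ℂ) : 0 ≤ Nsq y :=
  Finset.sum_nonneg fun i _ => Complex.normSq_nonneg _

private lemma norm_symm_sq (y : Fin n → ℂ) :
    ‖(EuclideanSpace.equiv (Fin n) ℂ).symm y‖ ^ 2 = Nsq y := by
  rw [EuclideanSpace.norm_eq, Real.sq_sqrt (Finset.sum_nonneg fun i _ => sq_nonneg _)]
  refine Finset.sum_congr rfl fun i _ => ?_
  show ‖y i‖ ^ 2 = _
  rw [Complex.sq_norm]

private lemma star_dot_self (y : Fin n → ℂ) : star y ⬝ᵥ y = ((Nsq y : ℝ) : ℂ) := by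
  simp only [dotProduct, Nsq, Pi.star_apply, Complex.ofReal_sum]
  exact Finset.sum_congr rfl fun i _ => (Complex.normSq_eq_conj_mul_self).symm ▸ rfl

private lemma Nsq_mulVec_le {A : Mn n} {c : ℝ} (hA : ‖A‖ ≤ c) (y : Fin n → ℂ) :
    Nsq (A *ᵥ y) ≤ c ^ 2 * Nsq y := by
  have h0 : (0:ℝ) ≤ c := le_trans (norm_nonneg _) hA
  have h := Matrix.l2_opNorm_mulVec A ((EuclideanSpace.equiv (Fin n) ℂ).symm y)
  have h2 : ‖(EuclideanSpace.equiv (Fin n) ℂ).symm (A *ᵥ y)‖ ≤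
      c * ‖(EuclideanSpace.equiv (Fin n) ℂ).symm y‖ := by
    refine h.trans ?_
    exact mul_le_mul_of_nonneg_right hA (norm_nonneg _)
  calc Nsq (A *ᵥ y) = ‖(EuclideanSpace.equiv (Fin n) ℂ).symm (A *ᵥ y)‖ ^ 2 :=
        (norm_symm_sq _).symm
    _ ≤ (c * ‖(EuclideanSpace.equiv (Fin n) ℂ).symm y‖) ^ 2 := by
        exact pow_le_pow_left₀ (norm_nonneg _) h2 2
    _ = c ^ 2 * Nsq y := by rw [mul_pow, norm_symm_sq]

private lemma opNorm_le_of_Nsq {A : Mn n} {c : ℝ} (hc : 0 ≤ c)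
    (hA : ∀ y : Fin n → ℂ, Nsq (A *ᵥ y) ≤ c ^ 2 * Nsq y) : ‖A‖ ≤ c := by
  rw [Matrix.l2_opNorm_def]
  refine ContinuousLinearMap.opNorm_le_bound _ hc fun x => ?_
  set y : Fin n → ℂ := (EuclideanSpace.equiv (Fin n) ℂ) x with hy
  have hx : x = (EuclideanSpace.equiv (Fin n) ℂ).symm y := rfl
  have happ : (Matrix.toEuclideanLin.trans LinearMap.toContinuousLinearMap A) x
      = (EuclideanSpace.equiv (Fin n) ℂ).symm (A *ᵥ y) := by
    rw [hx]
    rfl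
  rw [happ, hx]
  have h1 : ‖(EuclideanSpace.equiv (Fin n) ℂ).symm (A *ᵥ y)‖ ^ 2 ≤
      (c * ‖(EuclideanSpace.equiv (Fin n) ℂ).symm y‖) ^ 2 := by
    rw [norm_symm_sq, mul_pow, norm_symm_sq]
    exact hA y
  have h2 := Real.sqrt_le_sqrt h1
  rwa [Real.sqrt_sq (norm_nonneg _), Real.sqrt_sq (by positivity)] at h2


private lemma compact_and_bounded (G : Subgroup (GL (Fin n) ℂ)) (C : ℝ)
    (hbd : ∀ g ∈ G, ‖(g : Mn n)‖ ≤ C) :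
    CompactSpace G.topologicalClosure ∧
      ∀ u : GL (Fin n) ℂ, u ∈ G.topologicalClosure →
        ‖(u : Mn n)‖ ≤ C ∧ ‖((u⁻¹ : GL (Fin n) ℂ) : Mn n)‖ ≤ C := by
  classical
  set φ : GL (Fin n) ℂ → Mn n × (Mn n)ᵐᵒᵖ := ⇑(Units.embedProduct (Mn n)) with hφ
  set D : Set (Mn n × (Mn n)ᵐᵒᵖ) :=
    {p | p.1 * MulOpposite.unop p.2 = 1 ∧ MulOpposite.unop p.2 * p.1 = 1 ∧
      ‖p.1‖ ≤ C ∧ ‖MulOpposite.unop p.2‖ ≤ C} with hD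
  have hunop : Continuous fun p : Mn n × (Mn n)ᵐᵒᵖ => MulOpposite.unop p.2 :=
    MulOpposite.continuous_unop.comp continuous_snd
  have hDclosed : IsClosed D := by
    refine IsClosed.inter (isClosed_eq (continuous_fst.mul hunop) continuous_const) ?_
    refine IsClosed.inter (isClosed_eq (hunop.mul continuous_fst) continuous_const) ?_
    exact IsClosed.inter (isClosed_le continuous_fst.norm continuous_const)
      (isClosed_le hunop.norm continuous_const)
  haveI : ProperSpace (Mn n) := FiniteDimensional.proper ℂ (Mn n)
  have hDcompact : IsCompact D := by
    refine IsCompact.of_isClosed_subset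
      ((isCompact_closedBall (0 : Mn n) C).prod
        ((isCompact_closedBall (0 : Mn n) C).image MulOpposite.opHomeomorph.continuous))
      hDclosed ?_
    rintro p ⟨-, -, h3, h4⟩
    refine ⟨mem_closedBall_zero_iff.mpr h3, ?_⟩
    exact ⟨MulOpposite.unop p.2, mem_closedBall_zero_iff.mpr h4, by simp⟩
  have hGD : φ '' ↑G ⊆ D := by
    rintro - ⟨g, hg, rfl⟩
    refine ⟨?_, ?_, ?_, ?_⟩
    · simpa [φ, Units.embedProduct] using g.mul_inv
    · simpa [φ, Units.embedProduct] using g.inv_mul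
    · simpa [φ, Units.embedProduct] using hbd g hg
    · simpa [φ, Units.embedProduct] using hbd g⁻¹ (G.inv_mem hg)
  have hclcomp : IsCompact (closure (φ '' ↑G)) :=
    IsCompact.of_isClosed_subset hDcompact isClosed_closure (closure_minimal hGD hDclosed)
  have hKset : ((G.topologicalClosure : Subgroup (GL (Fin n) ℂ)) : Set (GL (Fin n) ℂ))
      = closure ↑G := Subgroup.topologicalClosure_coe
  have hpre := Units.isInducing_embedProduct (M := Mn n)
    |>.closure_eq_preimage_closure_image (s := (↑G : Set (GL (Fin n) ℂ)))
  have himg : φ '' ↑G.topologicalClosure = closure (φ '' ↑G) := by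
    apply Set.Subset.antisymm
    · rw [hKset]
      exact image_closure_subset_closure_image Units.continuous_embedProduct
    · intro p hp
      have hpD : p ∈ D := closure_minimal hGD hDclosed hp
      have hueq : φ (⟨p.1, MulOpposite.unop p.2, hpD.1, hpD.2.1⟩ : GL (Fin n) ℂ) = p := by
        exact Prod.ext rfl (MulOpposite.op_unop p.2)
      refine ⟨⟨p.1, MulOpposite.unop p.2, hpD.1, hpD.2.1⟩, ?_, hueq⟩
      rw [hKset, hpre, Set.mem_preimage]
      show φ _ ∈ _
      rw [hueq]
      exact hp
  have hmemD : ∀ u : GL (Fin n) ℂ, u ∈ G.topologicalClosure → φ u ∈ D := by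
    intro u hu
    have : φ u ∈ closure (φ '' ↑G) := by
      rw [← himg]; exact Set.mem_image_of_mem φ hu
    exact closure_minimal hGD hDclosed this
  constructor
  · exact isCompact_iff_compactSpace.mp
      ((Units.isEmbedding_embedProduct.isCompact_iff).mpr (himg ▸ hclcomp))
  · intro u hu
    obtain ⟨-, -, h3, h4⟩ := hmemD u hu
    exact ⟨h3, by simpa [φ, Units.embedProduct] using h4⟩


private lemma main_aux (n : ℕ) (hn : 0 < n)
    (G : Subgroup (GL (Fin n) ℂ)) (C : ℝ)
    (hbd : ∀ g ∈ G, ‖(g : Mn n)‖ ≤ C) :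
    ∃ v : Mn n, IsUnit v ∧ ‖v‖ * ‖v⁻¹‖ ≤ C ^ 2 ∧
      ∀ g ∈ G, v * (g : Mn n) * v⁻¹ ∈ Matrix.unitaryGroup (Fin n) ℂ := by
  classical
  set K : Subgroup (GL (Fin n) ℂ) := G.topologicalClosure with hK
  obtain ⟨hKcomp, hKbd⟩ := compact_and_bounded G C hbd
  haveI : CompactSpace ↥K := hKcomp
  -- `C ≥ 1`
  have hC1 : (1:ℝ) ≤ C := by
    have h1 := hbd 1 G.one_mem
    rw [Units.val_one] at h1
    by_contra hlt
    push_neg at hlt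
    have hC0' : (0:ℝ) ≤ C := le_trans (norm_nonneg _) h1
    set x : Fin n → ℂ := Pi.single ⟨0, hn⟩ 1 with hx
    have hNx : Nsq x = 1 := by
      simp [Nsq, hx, Pi.single_apply, apply_ite Complex.normSq]
    have h2 := Nsq_mulVec_le h1 x
    rw [Matrix.one_mulVec, hNx] at h2
    nlinarith
  have hC0 : (0:ℝ) ≤ C := le_trans zero_le_one hC1
  -- Haar measure on the compact group K
  letI : MeasurableSpace ↥K := borel _
  haveI : BorelSpace ↥K := ⟨rfl⟩
  haveI : MeasurableMul ↥K :=
    ⟨fun c => (continuous_const.mul continuous_id).measurable,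
     fun c => (continuous_id.mul continuous_const).measurable⟩
  set K₀ : TopologicalSpace.PositiveCompacts ↥K :=
    ⟨⟨Set.univ, isCompact_univ⟩, by rw [interior_univ]; exact ⟨1, Set.mem_univ 1⟩⟩ with hK₀
  set μ : MeasureTheory.Measure ↥K := MeasureTheory.Measure.haarMeasure K₀ with hμ
  haveI : IsProbabilityMeasure μ :=
    ⟨by exact MeasureTheory.Measure.haarMeasure_self (K₀ := K₀)⟩
  -- the averaged matrix
  set f : ↥K → Mn n := fun k => ((↑(k⁻¹ : ↥K) : GL (Fin n) ℂ) : Mn n) with hf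
  have hfcont : Continuous f := by
    have h1 : Continuous fun k : ↥K => (k⁻¹ : ↥K) := continuous_inv
    have h2 : Continuous fun k : ↥K => (↑k : GL (Fin n) ℂ) := continuous_subtype_val
    have h3 : Continuous fun u : GL (Fin n) ℂ => (↑u : Mn n) := Units.continuous_val
    exact h3.comp (h2.comp h1)
  have hfbd : ∀ k : ↥K, ‖f k‖ ≤ C := fun k => (hKbd _ (k⁻¹).2).1
  have hfbd' : ∀ k : ↥K, ‖((↑k : GL (Fin n) ℂ) : Mn n)‖ ≤ C := fun k => (hKbd _ k.2).1
  have hfinv : ∀ k : ↥K, ((↑k : GL (Fin n) ℂ) : Mn n) * f k = 1 := by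
    intro k
    have h1 : ((↑(k⁻¹ : ↥K) : GL (Fin n) ℂ)) = (↑k : GL (Fin n) ℂ)⁻¹ := rfl
    show ((↑k : GL (Fin n) ℂ) : Mn n) * ((↑(k⁻¹ : ↥K) : GL (Fin n) ℂ) : Mn n) = 1
    rw [h1]
    exact (↑k : GL (Fin n) ℂ).mul_inv
  set e : Fin n → Fin n → ↥K → ℂ := fun i j k => ((f k)ᴴ * (f k)) i j with he
  have hecont : ∀ i j, Continuous (e i j) := by
    intro i j
    have : e i j = fun k => ∑ l, (starRingEnd ℂ) (f k l i) * (f k l j) := by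
      funext k
      simp [he, Matrix.mul_apply, Matrix.conjTranspose_apply]
    rw [this]
    refine continuous_finset_sum _ fun l _ => Continuous.mul ?_ ?_
    · exact Complex.continuous_conj.comp
        ((continuous_apply i).comp ((continuous_apply l).comp hfcont))
    · exact (continuous_apply j).comp ((continuous_apply l).comp hfcont)
  have heint : ∀ i j, MeasureTheory.Integrable (e i j) μ := fun i j =>
    MeasureTheory.integrableOn_univ.mp
      ((hecont i j).continuousOn.integrableOn_compact isCompact_univ)
  set h : Mn n := Matrix.of (fun i j => ∫ k, e i j k ∂μ) with hh
  -- linear combinations of entries commute with the integral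
  have key : ∀ c : Fin n → Fin n → ℂ, ∑ a, ∑ b, c a b * h a b
      = ∫ k, (∑ a, ∑ b, c a b * e a b k) ∂μ := by
    intro c
    rw [MeasureTheory.integral_finset_sum _ (fun a _ =>
      MeasureTheory.integrable_finset_sum _ fun b _ => (heint a b).const_mul _)]
    refine Finset.sum_congr rfl fun a _ => ?_
    rw [MeasureTheory.integral_finset_sum _ (fun b _ => (heint a b).const_mul _)]
    refine Finset.sum_congr rfl fun b _ => ?_
    rw [MeasureTheory.integral_const_mul]
    rfl
  -- quadratic form of the integrand
  have hXquad : ∀ (k : ↥K) (x : Fin n → ℂ),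
      ∑ a, ∑ b, (star x a * x b) * e a b k = ((Nsq (f k *ᵥ x) : ℝ) : ℂ) := by
    intro k x
    have h1 : ∑ a, ∑ b, (star x a * x b) * e a b k
        = star x ⬝ᵥ ((f k)ᴴ * (f k)) *ᵥ x := by
      simp only [dotProduct, Matrix.mulVec, Finset.mul_sum]
      exact Finset.sum_congr rfl fun a _ => Finset.sum_congr rfl fun b _ => by
        simp only [Pi.star_apply]; ring
    rw [h1, ← Matrix.mulVec_mulVec, Matrix.dotProduct_mulVec, ← Matrix.star_mulVec,
      star_dot_self]
  have hquad : ∀ x : Fin n → ℂ,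
      star x ⬝ᵥ h *ᵥ x = ((∫ k, Nsq (f k *ᵥ x) ∂μ : ℝ) : ℂ) := by
    intro x
    have h1 : star x ⬝ᵥ h *ᵥ x = ∑ a, ∑ b, (star x a * x b) * h a b := by
      simp only [dotProduct, Matrix.mulVec, Finset.mul_sum]
      exact Finset.sum_congr rfl fun a _ => Finset.sum_congr rfl fun b _ => by
        simp only [Pi.star_apply]; ring
    rw [h1, key, MeasureTheory.integral_congr_ae
      (Filter.Eventually.of_forall fun k => hXquad k x)]
    exact integral_ofReal
  -- integrability of the real quadratic integrand
  have hNint : ∀ x : Fin n → ℂ, MeasureTheory.Integrable (fun k => Nsq (f k *ᵥ x)) μ := by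
    intro x
    have hv : Continuous fun k => f k *ᵥ x := by
      refine continuous_pi fun i => ?_
      have : (fun k => (f k *ᵥ x) i) = fun k => ∑ l, f k i l * x l := by
        funext k; rfl
      rw [this]
      exact continuous_finset_sum _ fun l _ =>
        (((continuous_apply l).comp ((continuous_apply i).comp hfcont))).mul continuous_const
    have hcont : Continuous fun k => Nsq (f k *ᵥ x) :=
      continuous_finset_sum _ fun i _ =>
        Complex.continuous_normSq.comp ((continuous_apply i).comp hv)
    exact MeasureTheory.integrableOn_univ.mp
      (hcont.continuousOn.integrableOn_compact isCompact_univ)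
  have hupper : ∀ x : Fin n → ℂ, ∫ k, Nsq (f k *ᵥ x) ∂μ ≤ C^2 * Nsq x := by
    intro x
    have := MeasureTheory.integral_mono (hNint x) (MeasureTheory.integrable_const _)
      (fun k => Nsq_mulVec_le (hfbd k) x)
    simpa [MeasureTheory.integral_const, measure_univ] using this
  have hlower : ∀ x : Fin n → ℂ, Nsq x ≤ C^2 * ∫ k, Nsq (f k *ᵥ x) ∂μ := by
    intro x
    have hpt : ∀ k : ↥K, Nsq x ≤ C^2 * Nsq (f k *ᵥ x) := by
      intro k
      have hx : ((↑k : GL (Fin n) ℂ) : Mn n) *ᵥ (f k *ᵥ x) = x := by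
        rw [Matrix.mulVec_mulVec, hfinv k, Matrix.one_mulVec]
      calc Nsq x = Nsq (((↑k : GL (Fin n) ℂ) : Mn n) *ᵥ (f k *ᵥ x)) := by rw [hx]
        _ ≤ C^2 * Nsq (f k *ᵥ x) := Nsq_mulVec_le (hfbd' k) _
    have := MeasureTheory.integral_mono (MeasureTheory.integrable_const _)
      ((hNint x).const_mul (C^2)) hpt
    simpa [MeasureTheory.integral_const, measure_univ,
      MeasureTheory.integral_const_mul] using this
  -- invariance of h under the group
  have hconj : ∀ (u : GL (Fin n) ℂ), u ∈ K → ((u : Mn n))ᴴ * h * (u : Mn n) = h := by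
    intro u hu
    set uK : ↥K := ⟨u, hu⟩ with huK
    have hentry : ∀ i j, (((u : Mn n))ᴴ * h * (u : Mn n)) i j = h i j := by
      intro i j
      have h1 : ∀ (A : Mn n), (((u : Mn n))ᴴ * A * (u : Mn n)) i j
          = ∑ a, ∑ b, ((u : Mn n)ᴴ i a * (u : Mn n) b j) * A a b := by
        intro A
        simp only [Matrix.mul_apply, Finset.sum_mul, Finset.mul_sum]
        rw [Finset.sum_comm]
        exact Finset.sum_congr rfl fun a _ => Finset.sum_congr rfl fun b _ => by ring
      have h2 : ∀ k : ↥K, ∑ a, ∑ b, ((u : Mn n)ᴴ i a * (u : Mn n) b j) * e a b k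
          = e i j (uK⁻¹ * k) := by
        intro k
        have hfk : f k * (u : Mn n) = f (uK⁻¹ * k) := by
          have h3 : (uK⁻¹ * k)⁻¹ = k⁻¹ * uK := by group
          show (↑(↑(k⁻¹ : ↥K) : GL (Fin n) ℂ) : Mn n) * (u : Mn n) = _
          rw [hf]
          show _ = (↑(↑((uK⁻¹ * k)⁻¹ : ↥K) : GL (Fin n) ℂ) : Mn n)
          rw [h3]
          rfl
        have h4 : e i j (uK⁻¹ * k) = ((f k * (u : Mn n))ᴴ * (f k * (u : Mn n))) i j := by
          rw [hfk]
        rw [h4]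
        have hexp : (f k * (u : Mn n))ᴴ * (f k * (u : Mn n))
            = (u : Mn n)ᴴ * ((f k)ᴴ * (f k)) * (u : Mn n) := by
          rw [Matrix.conjTranspose_mul]
          simp only [Matrix.mul_assoc]
        rw [hexp, h1]
      rw [h1, key, MeasureTheory.integral_congr_ae
        (Filter.Eventually.of_forall h2),
        MeasureTheory.integral_mul_left_eq_self (e i j) (uK⁻¹)]
      rfl
    exact Matrix.ext hentry
  -- h is positive definite
  have hherm : h.IsHermitian := by
    refine Matrix.ext fun i j => ?_
    show star (h j i) = h i j
    have h1 : star (h j i) = ∫ k, (starRingEnd ℂ) (e j i k) ∂μ :=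
      (integral_conj (f := e j i)).symm
    rw [h1]
    refine MeasureTheory.integral_congr_ae (Filter.Eventually.of_forall fun k => ?_)
    have hX : ((f k)ᴴ * (f k)).IsHermitian := Matrix.isHermitian_conjTranspose_mul_self (f k)
    show star (((f k)ᴴ * (f k)) j i) = ((f k)ᴴ * (f k)) i j
    rw [← Matrix.conjTranspose_apply, hX.eq]
  have hpd : h.PosDef := by
    refine Matrix.posDef_iff_dotProduct_mulVec.mpr ⟨hherm, fun x hx => ?_⟩
    rw [hquad x]
    rw [Complex.zero_lt_real]
    have hNx : 0 < Nsq x := by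
      obtain ⟨i, hi⟩ := Function.ne_iff.mp hx
      refine Finset.sum_pos' (fun j _ => Complex.normSq_nonneg _) ⟨i, Finset.mem_univ i, ?_⟩
      simpa [Complex.normSq_pos] using hi
    nlinarith [hlower x]
  have hps : h.PosSemidef := hpd.posSemidef
  set v : Mn n := CFC.sqrt h with hv
  have hvps : v.PosSemidef := Matrix.nonneg_iff_posSemidef.mp (CFC.sqrt_nonneg h)
  have hvherm : vᴴ = v := hvps.isHermitian
  have hvv : v * v = h := CFC.sqrt_mul_sqrt_self h hps.nonneg
  have hdetv : IsUnit v.det := by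
    have hdh : IsUnit h.det := (Matrix.isUnit_iff_isUnit_det h).mp hpd.isUnit
    rw [← hvv, Matrix.det_mul] at hdh
    exact isUnit_of_mul_isUnit_left hdh
  have hvu : IsUnit v := (Matrix.isUnit_iff_isUnit_det v).mpr hdetv
  have hvinv1 : v * v⁻¹ = 1 := Matrix.mul_nonsing_inv v hdetv
  have hvinv2 : v⁻¹ * v = 1 := Matrix.nonsing_inv_mul v hdetv
  have hvinvherm : v⁻¹ᴴ = v⁻¹ := by rw [Matrix.conjTranspose_nonsing_inv, hvherm]
  -- quadratic identity for v
  have hvquad : ∀ y : Fin n → ℂ, Nsq (v *ᵥ y) = ∫ k, Nsq (f k *ᵥ y) ∂μ := by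
    intro y
    have h1 : ((Nsq (v *ᵥ y) : ℝ) : ℂ) = star y ⬝ᵥ h *ᵥ y := by
      rw [← star_dot_self (v *ᵥ y), Matrix.star_mulVec, ← Matrix.dotProduct_mulVec,
        Matrix.mulVec_mulVec, hvherm, hvv]
    exact Complex.ofReal_injective (h1.trans (hquad y))
  -- norm bounds
  have hnv : ‖v‖ ≤ C := by
    refine opNorm_le_of_Nsq hC0 fun y => ?_
    rw [hvquad y]
    exact hupper y
  have hnvinv : ‖v⁻¹‖ ≤ C := by
    refine opNorm_le_of_Nsq hC0 fun y => ?_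
    have hz : v *ᵥ (v⁻¹ *ᵥ y) = y := by
      rw [Matrix.mulVec_mulVec, hvinv1, Matrix.one_mulVec]
    calc Nsq (v⁻¹ *ᵥ y) ≤ C^2 * ∫ k, Nsq (f k *ᵥ (v⁻¹ *ᵥ y)) ∂μ := hlower _
      _ = C^2 * Nsq (v *ᵥ (v⁻¹ *ᵥ y)) := by rw [hvquad]
      _ = C^2 * Nsq y := by rw [hz]
  refine ⟨v, hvu, ?_, ?_⟩
  · calc ‖v‖ * ‖v⁻¹‖ ≤ C * C := mul_le_mul hnv hnvinv (norm_nonneg _) hC0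
      _ = C^2 := (sq C).symm
  · intro g hg
    have hinvh : ((g : Mn n))ᴴ * h * (g : Mn n) = h :=
      hconj g (Subgroup.le_topologicalClosure G hg)
    rw [Matrix.mem_unitaryGroup_iff', Matrix.star_eq_conjTranspose]
    have e1 : (v * (g : Mn n) * v⁻¹)ᴴ = v⁻¹ * ((g : Mn n))ᴴ * v := by
      rw [Matrix.conjTranspose_mul, Matrix.conjTranspose_mul, hvinvherm, hvherm,
        ← Matrix.mul_assoc]
    rw [e1]
    have e2 : v⁻¹ * ((g : Mn n))ᴴ * v * (v * (g : Mn n) * v⁻¹)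
        = v⁻¹ * (((g : Mn n))ᴴ * (v * v) * (g : Mn n)) * v⁻¹ := by
      simp only [Matrix.mul_assoc]
    rw [e2, hvv, hinvh, ← hvv, ← Matrix.mul_assoc, hvinv2, Matrix.one_mul, hvinv1]

end Aux

/-- A uniformly bounded subgroup of `GL(n, ℂ)` is simultaneously unitarizable, with a
similarity `v` whose condition number satisfies `‖v‖·‖v⁻¹‖ ≤ C²`. -/
theorem bounded_subgroup_unitarizable (n : ℕ)
    (G : Subgroup (Matrix.GeneralLinearGroup (Fin n) ℂ)) (C : ℝ)
    (hbd : ∀ g ∈ G, ‖(g : Matrix (Fin n) (Fin n) ℂ)‖ ≤ C) :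
    ∃ v : Matrix (Fin n) (Fin n) ℂ, IsUnit v ∧ ‖v‖ * ‖v⁻¹‖ ≤ C ^ 2 ∧
      ∀ g ∈ G, v * (g : Matrix (Fin n) (Fin n) ℂ) * v⁻¹ ∈ Matrix.unitaryGroup (Fin n) ℂ := by
  rcases Nat.eq_zero_or_pos n with hn | hn
  · subst hn
    refine ⟨1, isUnit_one, ?_, fun g _ => ?_⟩
    · rw [show (1 : Matrix (Fin 0) (Fin 0) ℂ)⁻¹ = 0 from Subsingleton.elim _ _,
        show (1 : Matrix (Fin 0) (Fin 0) ℂ) = 0 from Subsingleton.elim _ _, norm_zero,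
        mul_zero]
      positivity
    · exact Matrix.mem_unitaryGroup_iff.mpr (Subsingleton.elim _ _)
  · exact main_aux n hn G C hbd
end

section
/- Let A be a unital C*-algebra, θ a *-automorphism of A, and a ∈ A a cocycle, meaning |||a||| := sup_{n≥1} ‖Σ_{k=0}^{n-1} θᵏ(a)‖ < ∞. Then a is approximately inner: for every ε > 0 there exists x ∈ A with ‖x‖ ≤ |||a||| and ‖a − (x − θ(x))‖ < ε. -/
open Finset

/-- Every cocycle for a *-automorphism `θ` of a unital C*-algebra is approximately inner:
if `M` is the supremum of the norms of the partial sums `Σ_{k<n} θᵏ(a)` (`n ≥ 1`), then for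
every `ε > 0` there is `x` with `‖x‖ ≤ M` and `‖a - (x - θ x)‖ < ε`. -/
theorem cocycle_approximately_inner {A : Type*} [CStarAlgebra A]
    (θ : A ≃⋆ₐ[ℂ] A) (a : A) (M : ℝ)
    (hM : IsLUB {r : ℝ | ∃ n : ℕ, 1 ≤ n ∧ r = ‖∑ k ∈ Finset.range n, (⇑θ)^[k] a‖} M) :
    ∀ ε > (0 : ℝ), ∃ x : A, ‖x‖ ≤ M ∧ ‖a - (x - θ x)‖ < ε := by
  intro ε hε
  obtain ⟨S, hSdef⟩ : ∃ S : ℕ → A, ∀ m, S m = ∑ k ∈ Finset.range m, (⇑θ)^[k] a :=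
    ⟨_, fun _ => rfl⟩
  have hbound : ∀ m, 1 ≤ m → ‖S m‖ ≤ M := by
    intro m hm
    exact hM.1 ⟨m, hm, by rw [hSdef]⟩
  have hS1 : S 1 = a := by simp [hSdef]
  have hθS : ∀ m, θ (S m) = S (m + 1) - a := by
    intro m
    have : S (m + 1) = a + θ (S m) := by
      rw [hSdef, hSdef, Finset.sum_range_succ']
      simp only [Function.iterate_zero_apply]
      rw [map_sum]
      rw [add_comm]
      congr 1
      refine Finset.sum_congr rfl fun k _ => ?_
      exact Function.iterate_succ_apply' θ k a
    rw [this]; abel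
  -- choose n
  obtain ⟨n0, hn0⟩ := exists_nat_gt (2 * M / ε)
  obtain ⟨n, hnge, hngt⟩ : ∃ n : ℕ, 1 ≤ n ∧ 2 * M / ε < n :=
    ⟨n0 + 1, Nat.le_add_left 1 n0, lt_of_lt_of_le hn0 (by exact_mod_cast Nat.le_succ n0)⟩
  have hnpos : (0 : ℝ) < n := by exact_mod_cast hnge
  have hnC : ((n : ℂ)) ≠ 0 := Nat.cast_ne_zero.mpr (by omega)
  refine ⟨(n : ℂ)⁻¹ • ∑ m ∈ Finset.range n, S (m + 1), ?_, ?_⟩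
  · -- norm bound
    have h1 : ‖∑ m ∈ Finset.range n, S (m + 1)‖ ≤ n * M := by
      calc ‖∑ m ∈ Finset.range n, S (m + 1)‖ ≤ ∑ m ∈ Finset.range n, ‖S (m + 1)‖ :=
            norm_sum_le _ _
        _ ≤ ∑ _m ∈ Finset.range n, M :=
            Finset.sum_le_sum fun m _ => hbound _ (Nat.le_add_left 1 m)
        _ = n * M := by simp [mul_comm]
    rw [norm_smul]
    have hnn : ‖(n : ℂ)⁻¹‖ = (n : ℝ)⁻¹ := by simp
    rw [hnn]
    calc (n : ℝ)⁻¹ * ‖∑ m ∈ Finset.range n, S (m + 1)‖ ≤ (n : ℝ)⁻¹ * (n * M) :=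
          mul_le_mul_of_nonneg_left h1 (by positivity)
      _ = M := by field_simp
  · -- the key identity
    have hθx : θ ((n : ℂ)⁻¹ • ∑ m ∈ Finset.range n, S (m + 1))
        = (n : ℂ)⁻¹ • ∑ m ∈ Finset.range n, (S (m + 2) - a) := by
      rw [map_smul, map_sum]
      congr 1
      exact Finset.sum_congr rfl fun m _ => hθS (m + 1)
    have hsum : ∀ N : ℕ, ∑ m ∈ Finset.range N, S (m + 1)
        - ∑ m ∈ Finset.range N, (S (m + 2) - a) = S 1 - S (N + 1) + N • a := by
      intro N
      induction N with
      | zero => simp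
      | succ k ih =>
          rw [Finset.sum_range_succ, Finset.sum_range_succ]
          show _ = S 1 - S (k + 2) + (k + 1) • a
          calc (∑ m ∈ Finset.range k, S (m + 1) + S (k + 1))
                - (∑ m ∈ Finset.range k, (S (m + 2) - a) + (S (k + 2) - a))
              = (∑ m ∈ Finset.range k, S (m + 1)
                  - ∑ m ∈ Finset.range k, (S (m + 2) - a))
                + (S (k + 1) - S (k + 2) + a) := by abel
            _ = (S 1 - S (k + 1) + k • a) + (S (k + 1) - S (k + 2) + a) := by rw [ih]
            _ = S 1 - S (k + 2) + (k + 1) • a := by rw [succ_nsmul]; abel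
    have hkey : a - ((n : ℂ)⁻¹ • ∑ m ∈ Finset.range n, S (m + 1)
        - θ ((n : ℂ)⁻¹ • ∑ m ∈ Finset.range n, S (m + 1)))
        = (n : ℂ)⁻¹ • (S (n + 1) - a) := by
      rw [hθx]
      rw [← smul_sub, hsum n, hS1]
      have hna : (n : ℂ)⁻¹ • ((n : ℕ) • a) = a := by
        rw [← Nat.cast_smul_eq_nsmul ℂ, smul_smul, inv_mul_cancel₀ hnC, one_smul]
      rw [smul_add, hna, smul_sub]
      module
    rw [hkey, norm_smul]
    have hnorm : ‖(n : ℂ)⁻¹‖ = (n : ℝ)⁻¹ := by simp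
    rw [hnorm]
    have hb : ‖S (n + 1) - a‖ ≤ 2 * M := by
      calc ‖S (n + 1) - a‖ ≤ ‖S (n + 1)‖ + ‖a‖ := norm_sub_le _ _
        _ ≤ M + M := by
            refine add_le_add (hbound _ (by omega)) ?_
            have := hbound 1 le_rfl
            rwa [hS1] at this
        _ = 2 * M := by ring
    calc (n : ℝ)⁻¹ * ‖S (n + 1) - a‖ ≤ (n : ℝ)⁻¹ * (2 * M) :=
          mul_le_mul_of_nonneg_left hb (by positivity)
      _ < ε := by
          rw [inv_mul_lt_iff₀ hnpos]
          rw [div_lt_iff₀ hε] at hngt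
          linarith [mul_comm ε (n : ℝ)]
end

section
/- Let A be a unital C*-algebra, u ∈ A unitary, a ∈ A a cocycle for θ = Ad_u, and π_a : ℤ → M₂(A) the uniformly bounded representation n ↦ tⁿ where t = [[u, au],[0,u]]. Then π_a is unitarizable (i.e., there is an invertible w ∈ M₂(A) with w t w⁻¹ unitary) if and only if a is inner, i.e., a = x − θ(x) for some x ∈ A. -/
open Finset

set_option maxHeartbeats 1000000 in
/-- The uniformly bounded representation `n ↦ tⁿ` of `ℤ` into `M₂(A)` associated to a
cocycle `a` for `Ad_u` (where `t = [[u, au],[0,u]]`) is unitarizable if and only if `a` is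
inner, i.e. `a = x - u x u⁻¹` for some `x ∈ A`. -/
theorem cocycle_rep_unitarizable_iff_inner {A : Type*} [CStarAlgebra A]
    (u : A) (hu : u ∈ unitary A) (a : A) (M : ℝ)
    (hM : ∀ n : ℕ, ‖∑ k ∈ Finset.range n, (fun x => u * x * star u)^[k] a‖ ≤ M) :
    (∃ w : Matrix (Fin 2) (Fin 2) A, IsUnit w ∧
        w * !![u, a * u; 0, u] * Ring.inverse w ∈ unitary (Matrix (Fin 2) (Fin 2) A)) ↔
      ∃ x : A, a = x - u * x * star u := by
  obtain ⟨hu1, hu2⟩ := Unitary.mem_iff.mp hu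
  constructor
  · rintro ⟨w, hw, hwt⟩
    set t : Matrix (Fin 2) (Fin 2) A := !![u, a * u; 0, u] with ht
    set g := Ring.inverse w with hgdef
    have hgw : g * w = 1 := Ring.inverse_mul_cancel w hw
    have hwg : w * g = 1 := Ring.mul_inverse_cancel w hw
    set h : Matrix (Fin 2) (Fin 2) A := star w * w with hh
    have key : star t * h * t = h := by
      have h1 : star (w * t * g) * (w * t * g) = 1 := (Unitary.mem_iff.mp hwt).1
      have h2 : star g * (star t * (star w * w) * t) * g = 1 := by
        rw [← h1]
        simp only [StarMul.star_mul, mul_assoc]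
      have h3 : star w * star g = 1 := by rw [← StarMul.star_mul, hgw, star_one]
      calc star t * h * t = 1 * (star t * h * t) * 1 := by rw [one_mul, mul_one]
        _ = (star w * star g) * (star t * h * t) * (g * w) := by rw [h3, hgw]
        _ = star w * (star g * (star t * (star w * w) * t) * g) * w := by
            simp only [mul_assoc, hh]
        _ = star w * 1 * w := by rw [h2]
        _ = h := by rw [mul_one, hh]
    -- entry equations
    have e00 : star u * (h 0 0) * u = h 0 0 := by
      have := congrFun (congrFun key 0) 0
      simpa [ht, Matrix.mul_apply, Fin.sum_univ_two, Matrix.conjTranspose_apply, mul_assoc]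
        using this
    have e01 : star u * (h 0 0 * (a * u)) + star u * (h 0 1 * u) = h 0 1 := by
      have := congrFun (congrFun key 0) 1
      simpa [ht, Matrix.mul_apply, Fin.sum_univ_two, Matrix.conjTranspose_apply, mul_assoc]
        using this
    have cancel : ∀ z : A, u * (star u * z) = z := fun z => by rw [← mul_assoc, hu2, one_mul]
    have cancel' : ∀ z : A, z * u * star u = z := fun z => by rw [mul_assoc, hu2, mul_one]
    have comm : u * h 0 0 = h 0 0 * u := by
      conv_lhs => rw [← e00]
      rw [mul_assoc (star u) (h 0 0) u, cancel]
    have E : h 0 0 * a + h 0 1 = u * h 0 1 * star u := by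
      have e01' : u * (star u * (h 0 0 * (a * u)) + star u * (h 0 1 * u)) * star u
          = u * h 0 1 * star u := congrArg (fun z => u * z * star u) e01
      rw [mul_add, add_mul, cancel, cancel, ← mul_assoc (h 0 0) a u, cancel', cancel'] at e01'
      exact e01'
    -- order structure
    letI : PartialOrder A := CStarAlgebra.spectralOrder A
    letI : StarOrderedRing A := CStarAlgebra.spectralOrderedRing A
    set y0 := w 0 0 with hy0
    set y1 := w 1 0 with hy1
    set v0 := star (g 0 0) with hv0
    set v1 := star (g 0 1) with hv1
    have h00eq : h 0 0 = star y0 * y0 + star y1 * y1 := by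
      simp [hh, Matrix.mul_apply, Fin.sum_univ_two, Matrix.conjTranspose_apply, hy0, hy1]
    have hone : star v0 * y0 + star v1 * y1 = 1 := by
      have := congrFun (congrFun hgw 0) 0
      simpa [Matrix.mul_apply, Fin.sum_univ_two, Matrix.one_apply, hv0, hv1, hy0, hy1]
        using this
    have hone' : star y0 * v0 + star y1 * v1 = 1 := by
      have := congrArg star hone
      simpa [star_add, StarMul.star_mul] using this
    set b := star v0 * v0 + star v1 * v1 with hb
    have hb0 : (0:A) ≤ b := add_nonneg (star_mul_self_nonneg _) (star_mul_self_nonneg _)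
    set β := ‖b‖ with hβdef
    have hble : b ≤ β • (1:A) := by
      rw [show β • (1:A) = algebraMap ℝ A β from (Algebra.algebraMap_eq_smul_one β).symm]
      exact IsSelfAdjoint.le_algebraMap_norm_self (IsSelfAdjoint.of_nonneg hb0)
    have hz : (0:A) ≤ star (β • y0 - v0) * (β • y0 - v0) + star (β • y1 - v1) * (β • y1 - v1) :=
      add_nonneg (star_mul_self_nonneg _) (star_mul_self_nonneg _)
    have expand : star (β • y0 - v0) * (β • y0 - v0) + star (β • y1 - v1) * (β • y1 - v1)
        = (β*β) • (star y0 * y0 + star y1 * y1) - β • (star y0 * v0 + star y1 * v1)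
          - β • (star v0 * y0 + star v1 * y1) + (star v0 * v0 + star v1 * v1) := by
      simp only [star_sub, star_smul, star_trivial, sub_mul, mul_sub, smul_mul_assoc,
        mul_smul_comm, smul_smul, smul_sub, smul_add]
      module
    have step : (0:A) ≤ (β*β) • h 0 0 - β • 1 - β • 1 + b := by
      have h5 := hz
      rw [expand, hone, hone'] at h5
      rw [h00eq]
      exact h5
    have step2 : β • (1:A) ≤ (β*β) • h 0 0 := by
      have h4 : (β*β) • h 0 0 - β • 1 - β • 1 + b ≤ (β*β) • h 0 0 - β • 1 - β • 1 + β • (1:A) :=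
        add_le_add_right hble _
      have h5 := le_trans step h4
      rw [sub_add_cancel] at h5
      exact sub_nonneg.mp h5
    by_cases hβ0 : β = 0
    · -- degenerate: A is trivial
      have hbz : b = 0 := le_antisymm (by simpa [hβ0] using hble) hb0
      have hvv0 : star v0 * v0 = 0 := by
        refine le_antisymm ?_ (star_mul_self_nonneg _)
        calc star v0 * v0 = b - star v1 * v1 := by rw [hb]; abel
          _ ≤ b - 0 := by exact sub_le_sub_left (star_mul_self_nonneg _) _
          _ = 0 := by rw [hbz, sub_zero]
      have hv0z : v0 = 0 := (CStarRing.star_mul_self_eq_zero_iff v0).mp hvv0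
      have hvv1 : star v1 * v1 = 0 := by
        refine le_antisymm ?_ (star_mul_self_nonneg _)
        calc star v1 * v1 = b - star v0 * v0 := by rw [hb]; abel
          _ ≤ b - 0 := by exact sub_le_sub_left (star_mul_self_nonneg _) _
          _ = 0 := by rw [hbz, sub_zero]
      have hv1z : v1 = 0 := (CStarRing.star_mul_self_eq_zero_iff v1).mp hvv1
      have h01' : (0:A) = 1 := by simpa [hv0z, hv1z] using hone
      haveI := subsingleton_of_zero_eq_one h01'
      exact ⟨0, Subsingleton.elim _ _⟩
    · have hβpos : 0 < β := lt_of_le_of_ne (norm_nonneg b) (Ne.symm hβ0)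
      set c : A := β⁻¹ • (1:A) with hc
      have hX : (0:A) ≤ (β*β) • h 0 0 - β • 1 := sub_nonneg.mpr step2
      have hconj := star_left_conjugate_nonneg hX c
      have hcalc : star c * ((β*β) • h 0 0 - β • 1) * c = h 0 0 - β⁻¹ • 1 := by
        rw [hc]
        simp only [star_smul, star_trivial, star_one, sub_mul, mul_sub, smul_mul_assoc,
          mul_smul_comm, smul_smul, one_mul, mul_one]
        match_scalars <;> field_simp
      rw [hcalc] at hconj
      have h8 : β⁻¹ • (1:A) ≤ h 0 0 := sub_nonneg.mp hconj
      have hcnn : (0:A) ≤ β⁻¹ • (1:A) := by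
        have : star ((Real.sqrt β⁻¹) • (1:A)) * ((Real.sqrt β⁻¹) • (1:A)) = β⁻¹ • (1:A) := by
          simp only [star_smul, star_trivial, star_one, smul_mul_assoc, mul_smul_comm, smul_smul,
            mul_one]
          rw [Real.mul_self_sqrt (by positivity)]
        rw [← this]
        exact star_mul_self_nonneg _
      have hcunit : IsUnit (β⁻¹ • (1:A)) := by
        rw [show (β⁻¹ • (1:A)) = algebraMap ℝ A β⁻¹ from (Algebra.algebraMap_eq_smul_one _).symm]
        exact (isUnit_iff_ne_zero.mpr (inv_ne_zero hβ0)).map (algebraMap ℝ A)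
      have hunit : IsUnit (h 0 0) := CStarAlgebra.isUnit_of_le _ h8 ⟨hcnn, hcunit⟩
      set q := Ring.inverse (h 0 0) with hqdef
      have hq1 : q * h 0 0 = 1 := Ring.inverse_mul_cancel _ hunit
      have hq2 : h 0 0 * q = 1 := Ring.mul_inverse_cancel _ hunit
      have qu : q * u = u * q := by
        calc q * u = q * (u * (h 0 0 * q)) := by rw [hq2, mul_one]
          _ = q * (h 0 0 * (u * q)) := by rw [← mul_assoc u, comm, mul_assoc]
          _ = (q * h 0 0) * (u * q) := by rw [mul_assoc]
          _ = u * q := by rw [hq1, one_mul]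
      refine ⟨-(q * h 0 1), ?_⟩
      have ha : a = u * (q * h 0 1) * star u - q * h 0 1 := by
        have hE' : h 0 0 * a = u * h 0 1 * star u - h 0 1 := by
          rw [← E]; abel
        calc a = (q * h 0 0) * a := by rw [hq1, one_mul]
          _ = q * (h 0 0 * a) := by rw [mul_assoc]
          _ = q * (u * h 0 1 * star u - h 0 1) := by rw [hE']
          _ = q * (u * h 0 1 * star u) - q * h 0 1 := by rw [mul_sub]
          _ = u * (q * h 0 1) * star u - q * h 0 1 := by
              rw [← mul_assoc, ← mul_assoc, qu, mul_assoc u q (h 0 1)]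
      rw [ha]
      simp only [neg_mul, mul_neg, sub_neg_eq_add]
      abel
  · rintro ⟨x, hx⟩
    have hau : a * u = x * u - u * x := by
      rw [hx, sub_mul, mul_assoc, mul_assoc, hu1, mul_one]
    have hmul : (!![(1:A), -x; 0, 1]) * !![(1:A), x; 0, 1] = 1 := by
      rw [Matrix.mul_fin_two, Matrix.one_fin_two]
      simp
    have hmul' : (!![(1:A), x; 0, 1]) * !![(1:A), -x; 0, 1] = 1 := by
      rw [Matrix.mul_fin_two, Matrix.one_fin_two]
      simp
    set W : Matrix (Fin 2) (Fin 2) A := !![(1:A), -x; 0, 1]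
    set W' : Matrix (Fin 2) (Fin 2) A := !![(1:A), x; 0, 1]
    let U : (Matrix (Fin 2) (Fin 2) A)ˣ := ⟨W, W', hmul, hmul'⟩
    refine ⟨W, ⟨U, rfl⟩, ?_⟩
    have hinv : Ring.inverse W = W' := Ring.inverse_unit U
    rw [hinv]
    have hcalc : W * !![u, a * u; 0, u] * W' = !![u, 0; 0, u] := by
      rw [Matrix.mul_fin_two, Matrix.mul_fin_two]
      rw [hau]
      simp only [one_mul, zero_mul, mul_zero, mul_one, add_zero, zero_add, neg_mul]
      rw [show u * x + (x * u - u * x + -(x * u)) = 0 from by abel]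
    rw [hcalc]
    rw [Unitary.mem_iff]
    constructor
    · ext i j
      fin_cases i <;> fin_cases j <;>
        simp [Matrix.mul_apply, Fin.sum_univ_two, Matrix.conjTranspose_apply, hu1, hu2,
          Matrix.one_apply]
    · ext i j
      fin_cases i <;> fin_cases j <;>
        simp [Matrix.mul_apply, Fin.sum_univ_two, Matrix.conjTranspose_apply, hu1, hu2,
          Matrix.one_apply]
end

section
/- Let M be a unital countably degree-1 saturated C*-algebra and π : Γ → M a uniformly bounded representation of a countable amenable (discrete) group Γ, i.e., each π(s) is invertible, π(st) = π(s)π(t), and ‖π‖ := sup_s ‖π(s)‖ < ∞. Then π is unitarizable: there exists an invertible v ∈ M with ‖v‖·‖v⁻¹‖ ≤ ‖π‖² such that v π(s) v⁻¹ is unitary for all s ∈ Γ. -/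
open Filter Finset

/-- A degree-1 *-polynomial in countably many variables with coefficients in `M`:
a finite linear combination of terms `a * x_i * b`, `a * x_i* * b` and constants. -/
def IsDeg1StarPoly {M : Type*} [CStarAlgebra M] (f : (ℕ → M) → M) : Prop :=
  ∃ (c : M) (N : ℕ) (a b a' b' : Fin N → M) (idx idx' : Fin N → ℕ),
    ∀ x : ℕ → M,
      f x = c + (∑ i, a i * x (idx i) * b i) + (∑ i, a' i * star (x (idx' i)) * b' i)

/-- `M` is countably degree-1 saturated if every countable type of conditions
`‖P_n(x̄)‖ ∈ K_n` (with `P_n` degree-1 *-polynomials and `K_n ⊆ ℝ` compact) which is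
approximately finitely realized in the unit ball of `M` is realized in `M`. -/
def CountablyDegree1Saturated (M : Type*) [CStarAlgebra M] : Prop :=
  ∀ P : ℕ → (ℕ → M) → M, (∀ n, IsDeg1StarPoly (P n)) →
  ∀ K : ℕ → Set ℝ, (∀ n, IsCompact (K n)) →
    (∀ N : ℕ, 1 ≤ N → ∃ b : ℕ → M, (∀ m, ‖b m‖ ≤ 1) ∧
      ∀ n ≤ N, Metric.infDist ‖P n b‖ (K n) ≤ 1 / N) →
    ∃ b : ℕ → M, (∀ m, ‖b m‖ ≤ 1) ∧ ∀ n, ‖P n b‖ ∈ K n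

lemma specStarMulSelf {M : Type*} [CStarAlgebra M] [Nontrivial M] {C : ℝ} (hC1 : 1 ≤ C)
    (a : Mˣ) (ha : ‖(a : M)‖ ≤ C) (ha' : ‖((a⁻¹ : Mˣ) : M)‖ ≤ C) :
    ∀ x ∈ spectrum ℝ (star (a : M) * (a : M)), (C ^ 2)⁻¹ ≤ x ∧ x ≤ C ^ 2 := by
  intro x hx
  have hC0 : (0:ℝ) < C := lt_of_lt_of_le one_pos hC1
  have hC2 : (0:ℝ) < C ^ 2 := by positivity
  have hxnn : 0 ≤ x := spectrum_star_mul_self_nonneg _ hx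
  have hupper : x ≤ C ^ 2 := by
    calc x ≤ ‖x‖ := le_abs_self x
    _ ≤ ‖star (a : M) * (a : M)‖ := spectrum.norm_le_norm_of_mem hx
    _ = ‖(a : M)‖ * ‖(a : M)‖ := CStarRing.norm_star_mul_self
    _ ≤ C ^ 2 := by nlinarith [norm_nonneg ((a : M))]
  refine ⟨?_, hupper⟩
  -- the unit
  set p : Mˣ := star a * a with hp
  have hpc : (p : M) = star (a : M) * (a : M) := by
    simp [hp, Units.coe_star]
  have hx0 : x ≠ 0 := by
    intro h
    rw [h] at hx
    rw [← hpc] at hx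
    exact spectrum.zero_notMem ℝ p.isUnit hx
  have hxpos : 0 < x := lt_of_le_of_ne hxnn (Ne.symm hx0)
  have hinv : x⁻¹ ∈ spectrum ℝ ((↑p⁻¹ : M)) := by
    have := (spectrum.inv_mem_iff (r := Units.mk0 x hx0) (a := p)).mp (by rwa [hpc])
    simpa using this
  have hnormpinv : ‖(↑p⁻¹ : M)‖ ≤ C ^ 2 := by
    have : (↑p⁻¹ : M) = (↑(a⁻¹) : M) * star ((↑(a⁻¹)) : M) := by
      simp [hp, mul_inv_rev, Units.coe_star_inv]
    rw [this]
    calc ‖(↑(a⁻¹) : M) * star ((↑(a⁻¹)) : M)‖ ≤ ‖(↑(a⁻¹) : M)‖ * ‖star ((↑(a⁻¹)) : M)‖ :=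
      norm_mul_le _ _
    _ = ‖(↑(a⁻¹) : M)‖ * ‖(↑(a⁻¹) : M)‖ := by rw [norm_star]
    _ ≤ C ^ 2 := by nlinarith [norm_nonneg ((↑(a⁻¹) : M))]
  have hxinv : x⁻¹ ≤ C ^ 2 := by
    calc x⁻¹ ≤ ‖x⁻¹‖ := le_abs_self _
    _ ≤ ‖(↑p⁻¹ : M)‖ := spectrum.norm_le_norm_of_mem hinv
    _ ≤ C ^ 2 := hnormpinv
  exact (inv_le_comm₀ hxpos hC2).mp hxinv


lemma normStarMulSelfSub {M : Type*} [CStarAlgebra M] [Nontrivial M] {C : ℝ} (hC1 : 1 ≤ C)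
    (a : Mˣ) (ha : ‖(a : M)‖ ≤ C) (ha' : ‖((a⁻¹ : Mˣ) : M)‖ ≤ C)
    (hspec : ∀ x ∈ spectrum ℝ (star (a : M) * (a : M)), (C ^ 2)⁻¹ ≤ x ∧ x ≤ C ^ 2) :
    ‖star (a : M) * (a : M) - algebraMap ℝ M ((C ^ 2 + (C ^ 2)⁻¹) / 2)‖
      ≤ (C ^ 2 - (C ^ 2)⁻¹) / 2 := by
  have hC2 : (1:ℝ) ≤ C ^ 2 := by nlinarith
  have hinv : (C ^ 2)⁻¹ ≤ 1 := by
    rw [inv_le_one_iff₀]; right; exact hC2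
  set d : ℝ := (C ^ 2 + (C ^ 2)⁻¹) / 2 with hd
  set r : ℝ := (C ^ 2 - (C ^ 2)⁻¹) / 2 with hr
  have hsa : IsSelfAdjoint (star (a : M) * (a : M)) := IsSelfAdjoint.star_mul_self _
  have key : star (a : M) * (a : M) - algebraMap ℝ M d
      = cfc (fun x : ℝ => x - d) (star (a : M) * (a : M)) := by
    rw [cfc_sub (fun x : ℝ => x) (fun _ => d) (star (a : M) * (a : M)), cfc_id' ℝ _ hsa,
      cfc_const d _ hsa]
  rw [key]
  apply norm_cfc_le (by linarith)
  intro x hx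
  obtain ⟨h1, h2⟩ := hspec x hx
  rw [Real.norm_eq_abs, abs_le]
  constructor <;> [skip; skip] <;> simp only [hd, hr] <;> linarith

lemma norm_sum_sub_sum_le {M : Type*} [SeminormedAddCommGroup M] {Γ : Type*} [DecidableEq Γ]
    (A B : Finset Γ) (f : Γ → M) {c : ℝ} (hc : ∀ t, ‖f t‖ ≤ c) :
    ‖∑ t ∈ A, f t - ∑ t ∈ B, f t‖ ≤ (symmDiff A B).card * c := by
  have hcard : ((symmDiff A B).card : ℝ) = (A \ B).card + (B \ A).card := by
    have hdisj : Disjoint (A \ B) (B \ A) := by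
      rw [Finset.disjoint_left]
      intro x hx hx'
      simp only [Finset.mem_sdiff] at hx hx'
      tauto
    rw [symmDiff_def, Finset.sup_eq_union, Finset.card_union_of_disjoint hdisj]
    push_cast
    ring
  have h1 : ∑ t ∈ A, f t - ∑ t ∈ B, f t = ∑ t ∈ A \ B, f t - ∑ t ∈ B \ A, f t := by
    rw [← Finset.sum_inter_add_sum_sdiff A B f, ← Finset.sum_inter_add_sum_sdiff B A f,
      Finset.inter_comm B A]
    abel
  have bd : ∀ (S : Finset Γ), ‖∑ t ∈ S, f t‖ ≤ (S.card : ℝ) * c := by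
    intro S
    calc ‖∑ t ∈ S, f t‖ ≤ ∑ t ∈ S, ‖f t‖ := norm_sum_le _ _
    _ ≤ ∑ _t ∈ S, c := Finset.sum_le_sum fun t _ => hc t
    _ = (S.card : ℝ) * c := by rw [Finset.sum_const, nsmul_eq_mul]
  calc ‖∑ t ∈ A, f t - ∑ t ∈ B, f t‖
      ≤ ‖∑ t ∈ A \ B, f t‖ + ‖∑ t ∈ B \ A, f t‖ := by rw [h1]; exact norm_sub_le _ _
    _ ≤ ((A \ B).card : ℝ) * c + ((B \ A).card : ℝ) * c := add_le_add (bd _) (bd _)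
    _ = (symmDiff A B).card * c := by rw [hcard]; ring


noncomputable def myP {M : Type*} [CStarAlgebra M] {Γ : Type*} [Group Γ]
    (π : Γ →* Mˣ) (e : ℕ → Γ) (cc : ℝ) : ℕ → (ℕ → M) → M
  | 0 => fun x => x 0 - star (x 0)
  | 1 => fun x => x 0 - algebraMap ℝ M cc
  | (k+2) => fun x => star ((π (e k) : Mˣ) : M) * x 0 * ((π (e k) : Mˣ) : M) - x 0

def myK (rr : ℝ) (n : ℕ) : Set ℝ := if n = 1 then Set.Icc 0 rr else {0}

lemma myK_compact (rr : ℝ) (n : ℕ) : IsCompact (myK rr n) := by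
  unfold myK; split
  · exact isCompact_Icc
  · exact isCompact_singleton

lemma myP_deg {M : Type*} [CStarAlgebra M] {Γ : Type*} [Group Γ]
    (π : Γ →* Mˣ) (e : ℕ → Γ) (cc : ℝ) (n : ℕ) : IsDeg1StarPoly (myP π e cc n) := by
  rcases n with _ | _ | k
  · refine ⟨0, 1, fun _ => 1, fun _ => 1, fun _ => -1, fun _ => 1, fun _ => 0, fun _ => 0,
      fun x => ?_⟩
    simp [myP, Fin.sum_univ_one, sub_eq_add_neg]
  · refine ⟨-(algebraMap ℝ M cc), 1, fun _ => 1, fun _ => 1, fun _ => 0, fun _ => 0,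
      fun _ => 0, fun _ => 0, fun x => ?_⟩
    simp [myP, Fin.sum_univ_one, sub_eq_add_neg]
    abel
  · refine ⟨0, 2, ![star ((π (e k) : Mˣ) : M), -1], ![((π (e k) : Mˣ) : M), 1],
      fun _ => 0, fun _ => 0, fun _ => 0, fun _ => 0, fun x => ?_⟩
    simp [myP, Fin.sum_univ_two, sub_eq_add_neg]


/-- Every uniformly bounded representation of a countable amenable group in a unital
countably degree-1 saturated C*-algebra is unitarizable, with a similarity element `v`
satisfying `‖v‖·‖v⁻¹‖ ≤ ‖π‖²`. Amenability is expressed by a Følner sequence. -/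
theorem uniformly_bounded_rep_unitarizable
    {M : Type*} [CStarAlgebra M] (hsat : CountablyDegree1Saturated M)
    {Γ : Type*} [Group Γ] [Countable Γ] [DecidableEq Γ]
    (F : ℕ → Finset Γ) (hFne : ∀ n, (F n).Nonempty)
    (hFolner : ∀ s : Γ,
      Tendsto (fun n => (((symmDiff (F n) ((F n).image (s * ·))).card : ℝ) / (F n).card))
        atTop (nhds 0))
    (π : Γ →* Mˣ) (C : ℝ) (hC : ∀ s : Γ, ‖((π s : Mˣ) : M)‖ ≤ C) :
    ∃ v : Mˣ, ‖(v : M)‖ * ‖((v⁻¹ : Mˣ) : M)‖ ≤ C ^ 2 ∧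
      ∀ s : Γ, (v : M) * ((π s : Mˣ) : M) * ((v⁻¹ : Mˣ) : M) ∈ unitary M := by
  obtain hM | hM := subsingleton_or_nontrivial M
  · have hC0 : (0:ℝ) ≤ C := le_trans (norm_nonneg _) (hC 1)
    refine ⟨1, ?_, fun s => Unitary.mem_iff.mpr ⟨Subsingleton.elim _ _, Subsingleton.elim _ _⟩⟩
    have h0 : ((1 : Mˣ) : M) = 0 := Subsingleton.elim _ _
    rw [inv_one, h0, norm_zero, zero_mul]
    positivity
  have hC1 : (1:ℝ) ≤ C := by
    have h1 : ((π 1 : Mˣ) : M) = 1 := by rw [map_one, Units.val_one]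
    have := hC 1
    rwa [h1, norm_one] at this
  have hC0 : (0:ℝ) < C := lt_of_lt_of_le one_pos hC1
  have hC2pos : (0:ℝ) < C ^ 2 := by positivity
  have hC2ge1 : (1:ℝ) ≤ C ^ 2 := by nlinarith
  have hC2inv_le : (C ^ 2)⁻¹ ≤ 1 := by
    rw [inv_le_one_iff₀]; right; exact hC2ge1
  obtain ⟨e, he⟩ := exists_surjective_nat Γ
  set q : Γ → M := fun t => star ((π t⁻¹ : Mˣ) : M) * ((π t⁻¹ : Mˣ) : M) with hq
  have hinvcoe : ∀ t : Γ, (((π t⁻¹ : Mˣ)⁻¹ : Mˣ) : M) = ((π t : Mˣ) : M) := by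
    intro t; rw [← map_inv, inv_inv]
  have hqspec : ∀ t, ∀ x ∈ spectrum ℝ (q t), (C ^ 2)⁻¹ ≤ x ∧ x ≤ C ^ 2 := by
    intro t
    exact specStarMulSelf hC1 (π t⁻¹) (hC _) (by rw [hinvcoe]; exact hC t)
  have hqnorm : ∀ t, ‖q t‖ ≤ C ^ 2 := by
    intro t
    calc ‖q t‖ = ‖((π t⁻¹ : Mˣ) : M)‖ * ‖((π t⁻¹ : Mˣ) : M)‖ := CStarRing.norm_star_mul_self
    _ ≤ C ^ 2 := by nlinarith [norm_nonneg ((π t⁻¹ : Mˣ) : M), hC t⁻¹]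
  have hqsub : ∀ t, ‖q t - algebraMap ℝ M ((C ^ 2 + (C ^ 2)⁻¹) / 2)‖ ≤ (C ^ 2 - (C ^ 2)⁻¹) / 2 :=
    fun t => normStarMulSelfSub hC1 (π t⁻¹) (hC _) (by rw [hinvcoe]; exact hC t) (hqspec t)
  have hqstar : ∀ t, star (q t) = q t := fun t => by simp [hq, star_mul, mul_assoc]
  have hqconj : ∀ s t : Γ, star ((π s : Mˣ) : M) * q t * ((π s : Mˣ) : M) = q (s⁻¹ * t) := by
    intro s t
    simp only [hq, mul_inv_rev, inv_inv, map_mul, Units.val_mul, star_mul, mul_assoc]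
  set cc : ℝ := ((C ^ 2 + (C ^ 2)⁻¹) / 2) / C ^ 2 with hcc
  set rr : ℝ := ((C ^ 2 - (C ^ 2)⁻¹) / 2) / C ^ 2 with hrr
  have hrr0 : 0 ≤ rr := by
    rw [hrr]; apply div_nonneg _ (le_of_lt hC2pos); linarith
  -- approximate realization
  have happrox : ∀ N : ℕ, 1 ≤ N → ∃ b : ℕ → M, (∀ m, ‖b m‖ ≤ 1) ∧
      ∀ n ≤ N, Metric.infDist ‖myP π e cc n b‖ (myK rr n) ≤ 1 / N := by
    intro N hN
    have hNpos : (0:ℝ) < 1 / N := by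
      have : (0:ℝ) < N := by exact_mod_cast Nat.lt_of_lt_of_le Nat.zero_lt_one hN
      positivity
    have hev : ∀ᶠ m in atTop, ∀ k ∈ Finset.range N,
        ((symmDiff (F m) ((F m).image ((e k)⁻¹ * ·))).card : ℝ) / (F m).card ≤ 1 / N := by
      rw [Filter.eventually_all_finset]
      intro k _
      exact (hFolner (e k)⁻¹).eventually (eventually_le_nhds hNpos)
    obtain ⟨m, hm⟩ := hev.exists
    set A := F m with hA
    have hcard : (0:ℝ) < (A.card : ℝ) := by exact_mod_cast (hFne m).card_pos
    set ρ : ℝ := (C ^ 2 * (A.card : ℝ))⁻¹ with hρ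
    have hρ0 : (0:ℝ) ≤ ρ := by rw [hρ]; positivity
    set h0 : M := ρ • ∑ t ∈ A, q t with hh0
    have hmsa : star h0 = h0 := by
      rw [hh0, star_smul, star_trivial, star_sum]
      congr 1
      exact Finset.sum_congr rfl fun t _ => hqstar t
    have hsumnorm : ‖∑ t ∈ A, q t‖ ≤ (A.card : ℝ) * C ^ 2 := by
      calc ‖∑ t ∈ A, q t‖ ≤ ∑ t ∈ A, ‖q t‖ := norm_sum_le _ _
      _ ≤ ∑ _t ∈ A, C ^ 2 := Finset.sum_le_sum fun t _ => hqnorm t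
      _ = (A.card : ℝ) * C ^ 2 := by rw [Finset.sum_const, nsmul_eq_mul]
    have hmnorm : ‖h0‖ ≤ 1 := by
      rw [hh0, norm_smul, Real.norm_eq_abs, abs_of_nonneg hρ0]
      calc ρ * ‖∑ t ∈ A, q t‖ ≤ ρ * ((A.card : ℝ) * C ^ 2) :=
        mul_le_mul_of_nonneg_left hsumnorm hρ0
      _ = 1 := by rw [hρ]; field_simp
    have hcond1 : ‖h0 - algebraMap ℝ M cc‖ ≤ rr := by
      have halg : algebraMap ℝ M cc
          = ρ • ∑ _t ∈ A, algebraMap ℝ M ((C ^ 2 + (C ^ 2)⁻¹) / 2) := by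
        rw [Finset.sum_const, ← Nat.cast_smul_eq_nsmul ℝ, Algebra.algebraMap_eq_smul_one,
          Algebra.algebraMap_eq_smul_one, smul_smul, smul_smul]
        congr 1
        rw [hρ, hcc]
        field_simp
      rw [hh0, halg, ← smul_sub, ← Finset.sum_sub_distrib, norm_smul, Real.norm_eq_abs,
        abs_of_nonneg hρ0]
      have hsum2 : ‖∑ t ∈ A, (q t - algebraMap ℝ M ((C ^ 2 + (C ^ 2)⁻¹) / 2))‖
          ≤ (A.card : ℝ) * ((C ^ 2 - (C ^ 2)⁻¹) / 2) := by
        calc ‖∑ t ∈ A, (q t - algebraMap ℝ M ((C ^ 2 + (C ^ 2)⁻¹) / 2))‖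
            ≤ ∑ t ∈ A, ‖q t - algebraMap ℝ M ((C ^ 2 + (C ^ 2)⁻¹) / 2)‖ := norm_sum_le _ _
        _ ≤ ∑ _t ∈ A, ((C ^ 2 - (C ^ 2)⁻¹) / 2) := Finset.sum_le_sum fun t _ => hqsub t
        _ = (A.card : ℝ) * ((C ^ 2 - (C ^ 2)⁻¹) / 2) := by rw [Finset.sum_const, nsmul_eq_mul]
      calc ρ * ‖∑ t ∈ A, (q t - algebraMap ℝ M ((C ^ 2 + (C ^ 2)⁻¹) / 2))‖
          ≤ ρ * ((A.card : ℝ) * ((C ^ 2 - (C ^ 2)⁻¹) / 2)) :=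
          mul_le_mul_of_nonneg_left hsum2 hρ0
      _ = rr := by rw [hρ, hrr]; field_simp
    have hcond2 : ∀ k, k < N →
        ‖star ((π (e k) : Mˣ) : M) * h0 * ((π (e k) : Mˣ) : M) - h0‖ ≤ 1 / N := by
      intro k hk
      have hstep : star ((π (e k) : Mˣ) : M) * h0 * ((π (e k) : Mˣ) : M)
          = ρ • ∑ u ∈ A.image ((e k)⁻¹ * ·), q u := by
        rw [hh0, mul_smul_comm, smul_mul_assoc, Finset.mul_sum, Finset.sum_mul]
        congr 1
        rw [Finset.sum_image (by intro x _ y _ hxy; exact mul_left_cancel hxy)]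
        exact Finset.sum_congr rfl fun t _ => hqconj (e k) t
      rw [hstep, hh0, ← smul_sub, norm_smul, Real.norm_eq_abs, abs_of_nonneg hρ0]
      have hbd := norm_sum_sub_sum_le (A.image ((e k)⁻¹ * ·)) A q hqnorm
      calc ρ * ‖∑ u ∈ A.image ((e k)⁻¹ * ·), q u - ∑ t ∈ A, q t‖
          ≤ ρ * (((symmDiff (A.image ((e k)⁻¹ * ·)) A).card : ℝ) * C ^ 2) :=
          mul_le_mul_of_nonneg_left hbd hρ0
      _ = ((symmDiff A (A.image ((e k)⁻¹ * ·))).card : ℝ) / (A.card : ℝ) := by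
          rw [symmDiff_comm, hρ]; field_simp
      _ ≤ 1 / N := hm k (Finset.mem_range.mpr hk)
    refine ⟨fun i => if i = 0 then h0 else 0, ?_, ?_⟩
    · intro i
      dsimp only
      split
      · exact hmnorm
      · simp
    · intro n hn
      rcases n with _ | _ | k
      · have hP : myP π e cc 0 (fun i => if i = 0 then h0 else 0) = 0 := by
          show h0 - star h0 = 0
          rw [hmsa, sub_self]
        rw [hP, norm_zero, show myK rr 0 = {0} from rfl, Metric.infDist_singleton, dist_self]
        exact le_of_lt hNpos
      · have hP : myP π e cc 1 (fun i => if i = 0 then h0 else 0)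
            = h0 - algebraMap ℝ M cc := rfl
        rw [hP, show myK rr 1 = Set.Icc 0 rr from rfl,
          Metric.infDist_zero_of_mem (Set.mem_Icc.mpr ⟨norm_nonneg _, hcond1⟩)]
        exact le_of_lt hNpos
      · have hP : myP π e cc (k+2) (fun i => if i = 0 then h0 else 0)
            = star ((π (e k) : Mˣ) : M) * h0 * ((π (e k) : Mˣ) : M) - h0 := rfl
        rw [hP, show myK rr (k+2) = {0} from rfl, Metric.infDist_singleton, dist_zero_right,
          norm_norm]
        exact hcond2 k (by omega)
  obtain ⟨b, hb1, hb2⟩ := hsat (myP π e cc) (myP_deg π e cc) (myK rr) (myK_compact rr) happrox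
  set h : M := b 0 with hhdef
  have c0 : star h = h := by
    have h0 := hb2 0
    rw [show myK rr 0 = {0} from rfl] at h0
    have h1 : ‖h - star h‖ = 0 := h0
    have h2 := norm_eq_zero.mp h1
    have := sub_eq_zero.mp h2
    exact this.symm
  have hsa : IsSelfAdjoint h := c0
  have c1 : ‖h - algebraMap ℝ M cc‖ ≤ rr := by
    have h0 := hb2 1
    rw [show myK rr 1 = Set.Icc 0 rr from rfl] at h0
    exact h0.2
  have cconj : ∀ s : Γ, star ((π s : Mˣ) : M) * h * ((π s : Mˣ) : M) = h := by
    intro s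
    obtain ⟨k, rfl⟩ := he s
    have h0 := hb2 (k+2)
    rw [show myK rr (k+2) = {0} from rfl] at h0
    have h1 : ‖star ((π (e k) : Mˣ) : M) * h * ((π (e k) : Mˣ) : M) - h‖ = 0 := h0
    exact sub_eq_zero.mp (norm_eq_zero.mp h1)
  set α : ℝ := (C ^ 2)⁻¹ * (C ^ 2)⁻¹ with hα
  have hα0 : (0:ℝ) < α := by rw [hα]; positivity
  have e1 : cc - rr = α := by rw [hcc, hrr, hα]; field_simp; ring
  have e2 : cc + rr = 1 := by rw [hcc, hrr]; field_simp; ring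
  have hspec : ∀ x ∈ spectrum ℝ h, α ≤ x ∧ x ≤ 1 := by
    intro x hx
    have hmem : x - cc ∈ spectrum ℝ (h - algebraMap ℝ M cc) := by
      rw [← spectrum.sub_singleton_eq]
      exact Set.sub_mem_sub hx rfl
    have habs : |x - cc| ≤ rr := by
      calc |x - cc| = ‖x - cc‖ := (Real.norm_eq_abs _).symm
      _ ≤ ‖h - algebraMap ℝ M cc‖ := spectrum.norm_le_norm_of_mem hmem
      _ ≤ rr := c1
    rw [abs_le] at habs
    exact ⟨by linarith [habs.1], by linarith [habs.2]⟩
  have hg : ContinuousOn Real.sqrt (spectrum ℝ h) := Real.continuous_sqrt.continuousOn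
  have hsqrtpos : ∀ x ∈ spectrum ℝ h, 0 < Real.sqrt x := fun x hx =>
    Real.sqrt_pos.mpr (lt_of_lt_of_le hα0 (hspec x hx).1)
  have hgi : ContinuousOn (fun x : ℝ => (Real.sqrt x)⁻¹) (spectrum ℝ h) :=
    ContinuousOn.inv₀ hg fun x hx => ne_of_gt (hsqrtpos x hx)
  set v0 : M := cfc Real.sqrt h with hv0
  set w0 : M := cfc (fun x : ℝ => (Real.sqrt x)⁻¹) h with hw0
  have hv0sa : IsSelfAdjoint v0 := cfc_predicate _ h
  have hw0sa : IsSelfAdjoint w0 := cfc_predicate _ h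
  have hvw : v0 * w0 = 1 := by
    rw [hv0, hw0, ← cfc_mul _ _ h hg hgi,
      cfc_congr (g := fun _ : ℝ => (1:ℝ))
        (fun x hx => mul_inv_cancel₀ (ne_of_gt (hsqrtpos x hx))),
      cfc_const_one ℝ h hsa]
  have hwv : w0 * v0 = 1 := by
    rw [hv0, hw0, ← cfc_mul _ _ h hgi hg,
      cfc_congr (g := fun _ : ℝ => (1:ℝ))
        (fun x hx => inv_mul_cancel₀ (ne_of_gt (hsqrtpos x hx))),
      cfc_const_one ℝ h hsa]
  have hvv : v0 * v0 = h := by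
    rw [hv0, ← cfc_mul _ _ h hg hg,
      cfc_congr (f := fun x : ℝ => Real.sqrt x * Real.sqrt x) (g := fun x : ℝ => x)
        (fun x hx => Real.mul_self_sqrt (le_of_lt (lt_of_lt_of_le hα0 (hspec x hx).1))),
      cfc_id' ℝ h hsa]
  have hwhw : w0 * h * w0 = 1 := by
    rw [← hvv]
    calc w0 * (v0 * v0) * w0 = (w0 * v0) * (v0 * w0) := by simp only [mul_assoc]
    _ = 1 := by rw [hwv, hvw, one_mul]
  have hv0norm : ‖v0‖ ≤ 1 := by
    rw [hv0]
    apply norm_cfc_le zero_le_one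
    intro x hx
    rw [Real.norm_eq_abs, abs_of_nonneg (Real.sqrt_nonneg x)]
    rw [show (1:ℝ) = Real.sqrt 1 from Real.sqrt_one.symm]
    exact Real.sqrt_le_sqrt (hspec x hx).2
  have hw0norm : ‖w0‖ ≤ C ^ 2 := by
    rw [hw0]
    apply norm_cfc_le (le_of_lt hC2pos)
    intro x hx
    rw [Real.norm_eq_abs, abs_of_nonneg (inv_nonneg.mpr (Real.sqrt_nonneg x))]
    have h1 : (C ^ 2)⁻¹ ≤ Real.sqrt x := by
      have h2 : Real.sqrt α ≤ Real.sqrt x := Real.sqrt_le_sqrt (hspec x hx).1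
      rwa [hα, Real.sqrt_mul_self (le_of_lt (inv_pos.mpr hC2pos))] at h2
    exact (inv_le_comm₀ (hsqrtpos x hx) hC2pos).mpr h1
  refine ⟨⟨v0, w0, hvw, hwv⟩, ?_, ?_⟩
  · calc ‖v0‖ * ‖w0‖ ≤ 1 * C ^ 2 := mul_le_mul hv0norm hw0norm (norm_nonneg _) zero_le_one
    _ = C ^ 2 := one_mul _
  · intro s
    show v0 * ((π s : Mˣ) : M) * w0 ∈ unitary M
    set ps : M := ((π s : Mˣ) : M) with hps
    have hstar1 : star (v0 * ps * w0) = w0 * star ps * v0 := by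
      rw [star_mul, star_mul, hv0sa.star_eq, hw0sa.star_eq, mul_assoc]
    have huu : star (v0 * ps * w0) * (v0 * ps * w0) = 1 := by
      rw [hstar1]
      calc w0 * star ps * v0 * (v0 * ps * w0)
          = w0 * (star ps * (v0 * v0) * ps) * w0 := by simp only [mul_assoc]
      _ = w0 * (star ps * h * ps) * w0 := by rw [hvv]
      _ = w0 * h * w0 := by rw [cconj s]
      _ = 1 := hwhw
    have hU : IsUnit (v0 * ps * w0) :=
      ((⟨v0, w0, hvw, hwv⟩ : Mˣ) * π s * (⟨v0, w0, hvw, hwv⟩ : Mˣ)⁻¹).isUnit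
    obtain ⟨U, hUeq⟩ := hU
    have huu' : (v0 * ps * w0) * star (v0 * ps * w0) = 1 := by
      have k1 : (U : M) * (star (v0 * ps * w0) * (v0 * ps * w0)) * ((U⁻¹ : Mˣ) : M)
          = (v0 * ps * w0) * star (v0 * ps * w0) := by
        rw [hUeq, ← mul_assoc, mul_assoc ((v0 * ps * w0) * star (v0 * ps * w0)),
          show (v0 * ps * w0) * ((U⁻¹ : Mˣ) : M) = 1 from by rw [← hUeq]; exact Units.mul_inv U,
          mul_one]
      rw [← k1, huu, mul_one]
      exact Units.mul_inv U
    exact Unitary.mem_iff.mpr ⟨huu, huu'⟩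
end
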